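/- arXiv:1707.04014 — 3 statements merged into one kernel-verified Lean document; each statement's English description precedes it below -/
import Mathlib

section
/- Let Σ ⊂ ℝⁿ be a compact smooth embedded k-dimensional submanifold without boundary and let p₀ ≠ q₀ be two points of Σ. Then there exists ε > 0 and a smooth chord shortening flow (p,q) : [0,ε) → Σ × Σ relative to Σ with p(0) = p₀ and q(0) = q₀. Moreover the solution is unique: any two chord shortening flows with the same initial data agree on the intersection of their domains of definition. -/
open scoped RealInnerProductSpace ENNReal
open Set Filter Topology Metric

noncomputable section

/-- Euclidean `n`-space. -/
abbrev Euc (n : ℕ) := EuclideanSpace ℝ (Fin n)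

/-- The orthogonal projection `π_K` onto a submodule `K`, as a map `Euc n → Euc n`. -/
def projSM {n : ℕ} (K : Submodule ℝ (Euc n)) (v : Euc n) : Euc n :=
  (K.orthogonalProjectionOnto v : Euc n)

/-- `S` is a smooth embedded `k`-dimensional submanifold (without boundary) of `ℝⁿ`,
whose tangent space at each `x ∈ S` is the `k`-dimensional subspace `T x ⊆ ℝⁿ`:
every point of `S` has a neighbourhood in `S` which is the image of a smooth injective
parametrization, which is a homeomorphism onto its image, with injective differential whose
range is the assigned tangent space. -/
def IsSubmanifold (n k : ℕ) (S : Set (Euc n)) (T : Euc n → Submodule ℝ (Euc n)) : Prop :=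
  ∀ x ∈ S, ∃ (f : Euc k → Euc n) (u : Set (Euc k)) (v : Set (Euc n)),
    IsOpen u ∧ IsOpen v ∧ x ∈ v ∧ ContDiffOn ℝ (⊤ : ℕ∞) f u ∧ Set.InjOn f u ∧
    f '' u = S ∩ v ∧
    (∀ s ⊆ u, IsOpen s → ∃ w : Set (Euc n), IsOpen w ∧ f '' s = S ∩ w) ∧
    ∀ y ∈ u, Function.Injective (fderiv ℝ f y) ∧
      LinearMap.range ((fderiv ℝ f y) : Euc k →ₗ[ℝ] Euc n) = T (f y)

/-- The tangential part `η^T(x) = π_{T x}((x - y)/|x - y|)` of the outward unit conormal at `x`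
of the chord from `x` to `y`. -/
def conormalT {n : ℕ} (T : Euc n → Submodule ℝ (Euc n)) (x y : Euc n) : Euc n :=
  projSM (T x) (‖x - y‖⁻¹ • (x - y))

/-- A chord shortening flow relative to `S` (with tangent spaces `T`) on the time domain `dom`:
a pair of C¹ curves `p q : dom → S` with `p t ≠ q t`, satisfying
`p' = -π_{p}((p-q)/|p-q|)` and `q' = -π_{q}((q-p)/|q-p|)`. -/
def IsCSFOn {n : ℕ} (S : Set (Euc n)) (T : Euc n → Submodule ℝ (Euc n))
    (dom : Set ℝ) (p q : ℝ → Euc n) : Prop :=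
  ∀ t ∈ dom, p t ∈ S ∧ q t ∈ S ∧ p t ≠ q t ∧
    HasDerivWithinAt p (-(conormalT T (p t) (q t))) dom t ∧
    HasDerivWithinAt q (-(conormalT T (q t) (p t))) dom t

/-- The time interval `[0, Tm)` (where possibly `Tm = ∞`). -/
def csfDomain (Tm : ℝ≥0∞) : Set ℝ := {t : ℝ | 0 ≤ t ∧ ENNReal.ofReal t < Tm}

/-- A maximal chord shortening flow: one defined on `[0, Tm)` which cannot be extended to a
chord shortening flow on a strictly larger interval `[0, Tm')`. -/
def IsMaximalCSF {n : ℕ} (S : Set (Euc n)) (T : Euc n → Submodule ℝ (Euc n))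
    (Tm : ℝ≥0∞) (p q : ℝ → Euc n) : Prop :=
  IsCSFOn S T (csfDomain Tm) p q ∧
  ∀ Tm' : ℝ≥0∞, Tm < Tm' → ∀ p' q' : ℝ → Euc n,
    IsCSFOn S T (csfDomain Tm') p' q' →
    ¬ (∀ t ∈ csfDomain Tm, p' t = p t ∧ q' t = q t)

namespace ChordAux

variable {n k : ℕ} {S : Set (Euc n)} {T : Euc n → Submodule ℝ (Euc n)}

/-- The pseudo-inverse `(L* L)⁻¹ L*` of a continuous linear map. -/
def pinv (L : Euc k →L[ℝ] Euc n) : Euc n →L[ℝ] Euc k :=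
  (Ring.inverse (ContinuousLinearMap.adjoint L ∘L L)) ∘L ContinuousLinearMap.adjoint L

lemma isUnit_gram {L : Euc k →L[ℝ] Euc n} (hL : Function.Injective L) :
    IsUnit (ContinuousLinearMap.adjoint L ∘L L) := by
  rw [ContinuousLinearMap.isUnit_iff_bijective]
  have hinj : Function.Injective (ContinuousLinearMap.adjoint L ∘L L) := by
    rw [injective_iff_map_eq_zero]
    intro e he
    have h0 : (inner ℝ (L e) (L e) : ℝ) = 0 := by
      rw [← ContinuousLinearMap.adjoint_inner_left]
      simp only [ContinuousLinearMap.comp_apply] at he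
      rw [he, inner_zero_left]
    have hLe : L e = 0 := inner_self_eq_zero.mp h0
    have : L e = L 0 := by simpa using hLe
    simpa using hL this
  have hsurj := (LinearMap.injective_iff_surjective
    (f := ((ContinuousLinearMap.adjoint L ∘L L) : Euc k →ₗ[ℝ] Euc k))).mp hinj
  exact ⟨hinj, hsurj⟩

lemma gram_pinv_cancel {L : Euc k →L[ℝ] Euc n} (hL : Function.Injective L) (w : Euc n) :
    ContinuousLinearMap.adjoint L (L (pinv L w)) = ContinuousLinearMap.adjoint L w := by
  have h : (ContinuousLinearMap.adjoint L ∘L L) ∘L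
      (Ring.inverse (ContinuousLinearMap.adjoint L ∘L L)) = ContinuousLinearMap.id ℝ (Euc k) :=
    Ring.mul_inverse_cancel _ (isUnit_gram hL)
  calc ContinuousLinearMap.adjoint L (L (pinv L w))
      = ((ContinuousLinearMap.adjoint L ∘L L) ∘L
        (Ring.inverse (ContinuousLinearMap.adjoint L ∘L L)))
          (ContinuousLinearMap.adjoint L w) := rfl
    _ = ContinuousLinearMap.adjoint L w := by rw [h]; rfl

lemma apply_pinv_eq_proj {L : Euc k →L[ℝ] Euc n} (hL : Function.Injective L) (w : Euc n) :
    L (pinv L w) = projSM (LinearMap.range (L : Euc k →ₗ[ℝ] Euc n)) w := by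
  symm
  apply Submodule.eq_starProjection_of_mem_of_inner_eq_zero
  · exact LinearMap.mem_range.mpr ⟨pinv L w, rfl⟩
  · rintro z hz
    obtain ⟨e, rfl⟩ := LinearMap.mem_range.mp hz
    have h1 : (inner ℝ (w - L (pinv L w)) (((L : Euc k →ₗ[ℝ] Euc n)) e) : ℝ)
        = (inner ℝ (ContinuousLinearMap.adjoint L (w - L (pinv L w))) e : ℝ) := by
      rw [ContinuousLinearMap.adjoint_inner_left]; rfl
    rw [h1, map_sub, gram_pinv_cancel hL]
    simp

lemma contDiffAt_pinv {L₀ : Euc k →L[ℝ] Euc n} (hL : Function.Injective L₀) :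
    ContDiffAt ℝ (⊤ : ℕ∞) pinv L₀ := by
  have hadj : ContDiff ℝ (⊤ : ℕ∞)
      (fun L : Euc k →L[ℝ] Euc n => ContinuousLinearMap.adjoint L) := by
    have : IsBoundedLinearMap ℝ
        (fun L : Euc k →L[ℝ] Euc n => ContinuousLinearMap.adjoint L) := by
      refine ⟨⟨fun L M => map_add _ _ _, fun c L => ?_⟩, 1, one_pos, fun L => ?_⟩
      · simpa using (ContinuousLinearMap.adjoint (𝕜 := ℝ) (E := Euc k) (F := Euc n)).map_smul c L
      · simp [LinearIsometryEquiv.norm_map]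
    exact this.contDiff
  have hcompbil : ContDiff ℝ (⊤ : ℕ∞)
      (fun p : (Euc n →L[ℝ] Euc k) × (Euc k →L[ℝ] Euc n) => p.1.comp p.2) :=
    isBoundedBilinearMap_comp.contDiff
  have hgram : ContDiff ℝ (⊤ : ℕ∞)
      (fun L : Euc k →L[ℝ] Euc n => ContinuousLinearMap.adjoint L ∘L L) :=
    hcompbil.comp (hadj.prodMk contDiff_id)
  obtain ⟨u, hu⟩ := isUnit_gram hL
  have hinv : ContDiffAt ℝ (⊤ : ℕ∞)
      (fun M : Euc k →L[ℝ] Euc k => Ring.inverse M)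
      (ContinuousLinearMap.adjoint L₀ ∘L L₀) := by
    rw [← hu]
    exact contDiffAt_ringInverse ℝ u
  have h1 : ContDiffAt ℝ (⊤ : ℕ∞)
      (fun L : Euc k →L[ℝ] Euc n =>
        Ring.inverse (ContinuousLinearMap.adjoint L ∘L L)) L₀ :=
    ContDiffAt.comp (f := fun L : Euc k →L[ℝ] Euc n => ContinuousLinearMap.adjoint L ∘L L)
      L₀ hinv hgram.contDiffAt
  have hcompbil2 : ContDiff ℝ (⊤ : ℕ∞)
      (fun p : (Euc k →L[ℝ] Euc k) × (Euc n →L[ℝ] Euc k) => p.1.comp p.2) :=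
    isBoundedBilinearMap_comp.contDiff
  exact hcompbil2.contDiffAt.comp L₀ (h1.prodMk hadj.contDiffAt)

/-- The orthogonal projection onto the range of `L`, expressed through the pseudo-inverse. -/
def projL (L : Euc k →L[ℝ] Euc n) : Euc n →L[ℝ] Euc n := L ∘L pinv L

lemma apply_projL_eq {L : Euc k →L[ℝ] Euc n} (hL : Function.Injective L) (w : Euc n) :
    projL L w = projSM (LinearMap.range (L : Euc k →ₗ[ℝ] Euc n)) w :=
  apply_pinv_eq_proj hL w

lemma contDiffAt_projL {L₀ : Euc k →L[ℝ] Euc n} (hL : Function.Injective L₀) :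
    ContDiffAt ℝ (⊤ : ℕ∞) projL L₀ := by
  have hcompbil : ContDiff ℝ (⊤ : ℕ∞)
      (fun p : (Euc k →L[ℝ] Euc n) × (Euc n →L[ℝ] Euc k) => p.1.comp p.2) :=
    isBoundedBilinearMap_comp.contDiff
  exact hcompbil.contDiffAt.comp L₀ (contDiffAt_id.prodMk (contDiffAt_pinv hL))

lemma exists_chart (hsub : IsSubmanifold n k S T) {x : Euc n} (hx : x ∈ S) :
    ∃ (f : Euc k → Euc n) (g : Euc n → Euc k) (a₀ : Euc k) (u₂ : Set (Euc k)) (V : Set (Euc n)),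
      IsOpen u₂ ∧ a₀ ∈ u₂ ∧ f a₀ = x ∧ IsOpen V ∧ x ∈ V ∧
      f '' u₂ = S ∩ V ∧
      (∀ a ∈ u₂, ContDiffAt ℝ (⊤ : ℕ∞) f a) ∧
      (∀ a ∈ u₂, ContDiffAt ℝ (⊤ : ℕ∞) (fderiv ℝ f) a) ∧
      (∀ a ∈ u₂, Function.Injective (fderiv ℝ f a) ∧
        LinearMap.range ((fderiv ℝ f a) : Euc k →ₗ[ℝ] Euc n) = T (f a)) ∧
      ContDiffAt ℝ (⊤ : ℕ∞) g x ∧ g x = a₀ ∧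
      ∀ z ∈ S ∩ V, g z ∈ u₂ ∧ f (g z) = z := by
  obtain ⟨f, u, v, hu, hv, hxv, hf, hfinj, himg, hopen, hder⟩ := hsub x hx
  obtain ⟨a₀, ha₀u, ha₀⟩ : ∃ a₀ ∈ u, f a₀ = x := by
    have : x ∈ f '' u := by rw [himg]; exact ⟨hx, hxv⟩
    simpa using this
  have hfC : ∀ a ∈ u, ContDiffAt ℝ (⊤ : ℕ∞) f a := fun a ha => hf.contDiffAt (hu.mem_nhds ha)
  have hfdOn : ContDiffOn ℝ (⊤ : ℕ∞) (fderiv ℝ f) u :=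
    ((contDiffOn_infty_iff_fderiv_of_isOpen hu).mp hf).2
  have hfd : ∀ a ∈ u, ContDiffAt ℝ (⊤ : ℕ∞) (fderiv ℝ f) a :=
    fun a ha => hfdOn.contDiffAt (hu.mem_nhds ha)
  obtain ⟨hL₀inj, hL₀range⟩ := hder a₀ ha₀u
  set L₀ : Euc k →L[ℝ] Euc n := fderiv ℝ f a₀ with hL₀def
  set KR : Submodule ℝ (Euc n) := LinearMap.range ((L₀ : Euc k →ₗ[ℝ] Euc n)) with hKRdef
  set K' : Submodule ℝ (Euc n) := KRᗮ with hK'def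
  set F : Euc k × K' → Euc n := fun p => f p.1 + (p.2 : Euc n) with hFdef
  have hFC : ContDiffAt ℝ (⊤ : ℕ∞) F (a₀, (0 : K')) := by
    have h1 : ContDiffAt ℝ (⊤ : ℕ∞) (fun p : Euc k × K' => f p.1) (a₀, (0 : K')) :=
      (hfC a₀ ha₀u).comp _ contDiffAt_fst
    have h2 : ContDiff ℝ (⊤ : ℕ∞) (fun p : Euc k × K' => (p.2 : Euc n)) :=
      (K'.subtypeL.comp (ContinuousLinearMap.snd ℝ (Euc k) K')).contDiff
    exact h1.add h2.contDiffAt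
  set D : Euc k × K' →L[ℝ] Euc n :=
    L₀.comp (ContinuousLinearMap.fst ℝ (Euc k) K')
      + K'.subtypeL.comp (ContinuousLinearMap.snd ℝ (Euc k) K') with hDdef
  have hDapp : ∀ p : Euc k × K', D p = L₀ p.1 + (p.2 : Euc n) := fun p => rfl
  have hFD : HasFDerivAt F D (a₀, (0 : K')) := by
    have h1 : HasFDerivAt (fun p : Euc k × K' => f p.1)
        (L₀.comp (ContinuousLinearMap.fst ℝ (Euc k) K')) (a₀, (0 : K')) := by
      have hdf : HasFDerivAt f L₀ a₀ :=
        ((hfC a₀ ha₀u).differentiableAt (by simp)).hasFDerivAt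
      exact hdf.comp _ hasFDerivAt_fst
    have h2 : HasFDerivAt (fun p : Euc k × K' => (p.2 : Euc n))
        (K'.subtypeL.comp (ContinuousLinearMap.snd ℝ (Euc k) K')) (a₀, (0 : K')) :=
      (K'.subtypeL.comp (ContinuousLinearMap.snd ℝ (Euc k) K')).hasFDerivAt
    exact h1.add h2
  have hDbij : Function.Bijective D := by
    constructor
    · rw [injective_iff_map_eq_zero]
      rintro ⟨e, w⟩ hew
      have h0 : L₀ e + (w : Euc n) = 0 := by rw [hDapp (e, w)] at hew; exact hew
      have hLe : L₀ e ∈ KR := LinearMap.mem_range.mpr ⟨e, rfl⟩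
      have hLeK' : L₀ e ∈ K' := by
        have : L₀ e = -(w : Euc n) := eq_neg_of_add_eq_zero_left h0
        rw [this]
        exact K'.neg_mem w.2
      have hLe0 : L₀ e = 0 := by
        have := (Submodule.orthogonal_disjoint KR).le_bot ⟨hLe, hLeK'⟩
        simpa using this
      have he : e = 0 := hL₀inj (by simpa using hLe0)
      have hw : (w : Euc n) = 0 := by
        rw [he] at h0; simpa using h0
      exact Prod.ext he (Subtype.ext hw)
    · intro z
      have hy : (KR.orthogonalProjectionOnto z : Euc n) ∈ KR := (KR.orthogonalProjectionOnto z).2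
      obtain ⟨e, he⟩ := LinearMap.mem_range.mp hy
      refine ⟨(e, ⟨z - KR.orthogonalProjectionOnto z, Submodule.sub_starProjection_mem_orthogonal (K := KR) z⟩), ?_⟩
      rw [hDapp]
      show L₀ e + (z - (KR.orthogonalProjectionOnto z : Euc n)) = z
      have he' : L₀ e = (KR.orthogonalProjectionOnto z : Euc n) := he
      rw [he']
      abel
  set Deq : (Euc k × K') ≃L[ℝ] Euc n :=
    (LinearEquiv.ofBijective (D : Euc k × K' →ₗ[ℝ] Euc n)
      (by exact hDbij)).toContinuousLinearEquiv with hDeqdef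
  have hDeqD : (Deq : (Euc k × K') →L[ℝ] Euc n) = D :=
    ContinuousLinearMap.ext fun p => rfl
  have hFD' : HasFDerivAt F ((Deq : (Euc k × K') ≃L[ℝ] Euc n) :
      (Euc k × K') →L[ℝ] Euc n) (a₀, (0 : K')) := by rw [hDeqD]; exact hFD
  have h1top : ((⊤ : ℕ∞) : WithTop ℕ∞) ≠ 0 := by simp
  set G : Euc n → Euc k × K' := hFC.localInverse hFD' h1top with hGdef
  have hFa₀ : F (a₀, (0 : K')) = x := by simp [hFdef, ha₀]
  have hGx : G x = (a₀, (0 : K')) := by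
    have := hFC.localInverse_apply_image hFD' h1top
    rwa [hFa₀] at this
  have hGC : ContDiffAt ℝ (⊤ : ℕ∞) G x := by
    have := hFC.to_localInverse (f' := Deq) hFD' h1top
    rwa [hFa₀] at this
  have hlinv : ∀ᶠ p in 𝓝 (a₀, (0 : K')), G (F p) = p :=
    (hFC.hasStrictFDerivAt' hFD' h1top).eventually_left_inverse
  obtain ⟨N, hNsub, hNopen, hNmem⟩ := _root_.mem_nhds_iff.mp hlinv
  set u₂ : Set (Euc k) := u ∩ {a : Euc k | (a, (0 : K')) ∈ N} with hu₂def
  have hu₂open : IsOpen u₂ :=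
    hu.inter (hNopen.preimage (continuous_id.prodMk continuous_const))
  have ha₀u₂ : a₀ ∈ u₂ := ⟨ha₀u, hNmem⟩
  have hleft : ∀ a ∈ u₂, G (f a) = (a, (0 : K')) := by
    intro a ha
    have hFa : F (a, (0 : K')) = f a := by simp [hFdef]
    rw [← hFa]
    exact hNsub ha.2
  obtain ⟨V, hVopen, hVimg⟩ := hopen u₂ inter_subset_left hu₂open
  refine ⟨f, fun z => (G z).1, a₀, u₂, V, hu₂open, ha₀u₂, ha₀, hVopen, ?_, hVimg,
    fun a ha => hfC a ha.1, fun a ha => hfd a ha.1, fun a ha => hder a ha.1,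
    ?_, by show (G x).1 = a₀; rw [hGx], ?_⟩
  · have : x ∈ f '' u₂ := ⟨a₀, ha₀u₂, ha₀⟩
    rw [hVimg] at this
    exact this.2
  · exact (ContinuousLinearMap.fst ℝ (Euc k) K').contDiff.contDiffAt.comp x hGC
  · intro z hz
    rw [← hVimg] at hz
    obtain ⟨a, ha, rfl⟩ := hz
    show (G (f a)).1 ∈ u₂ ∧ f ((G (f a)).1) = f a
    rw [hleft a ha]
    exact ⟨ha, rfl⟩

lemma exists_projFamily (hsub : IsSubmanifold n k S T) {x : Euc n} (hx : x ∈ S) :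
    ∃ (P : Euc n → Euc n →L[ℝ] Euc n) (V : Set (Euc n)),
      IsOpen V ∧ x ∈ V ∧ ContDiffAt ℝ (⊤ : ℕ∞) P x ∧
      ∀ z ∈ S ∩ V, ∀ w, P z w = projSM (T z) w := by
  obtain ⟨f, g, a₀, u₂, V, hu₂, ha₀, hfa₀, hV, hxV, himg, hfC, hfd, hder, hgC, hgx, hginv⟩ :=
    exists_chart hsub hx
  refine ⟨fun z => projL (fderiv ℝ f (g z)), V, hV, hxV, ?_, ?_⟩
  · have h1 : ContDiffAt ℝ (⊤ : ℕ∞) (fun z => fderiv ℝ f (g z)) x := by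
      refine ContDiffAt.comp x ?_ hgC
      rw [hgx]; exact hfd a₀ ha₀
    have h2 : ContDiffAt ℝ (⊤ : ℕ∞) projL (fderiv ℝ f (g x)) := by
      rw [hgx]; exact contDiffAt_projL (hder a₀ ha₀).1
    exact h2.comp x h1
  · intro z hz w
    obtain ⟨hgu, hfgz⟩ := hginv z hz
    obtain ⟨hinj, hrange⟩ := hder (g z) hgu
    show projL (fderiv ℝ f (g z)) w = _
    rw [apply_projL_eq hinj, hrange, hfgz]

/-- The chord-shortening vector field on the ambient product space. -/
def VF (T : Euc n → Submodule ℝ (Euc n)) : Euc n × Euc n → Euc n × Euc n :=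
  fun z => (-(conormalT T z.1 z.2), -(conormalT T z.2 z.1))

lemma csf_local_unique (hsub : IsSubmanifold n k S T) {ε : ℝ}
    {p₁ q₁ p₂ q₂ : ℝ → Euc n}
    (h₁ : IsCSFOn S T (Ico 0 ε) p₁ q₁) (h₂ : IsCSFOn S T (Ico 0 ε) p₂ q₂)
    {τ : ℝ} (hτ : τ ∈ Ico 0 ε) (hpe : p₁ τ = p₂ τ) (hqe : q₁ τ = q₂ τ) :
    ∃ b, τ < b ∧ b < ε ∧ ∀ t ∈ Icc τ b, p₁ t = p₂ t ∧ q₁ t = q₂ t := by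
  obtain ⟨hpS, hqS, hpq, hdp, hdq⟩ := h₁ τ hτ
  set x := p₁ τ with hxdef
  set y := q₁ τ with hydef
  obtain ⟨P₁, V₁, hV₁, hxV₁, hP₁C, hP₁⟩ := exists_projFamily hsub hpS
  obtain ⟨P₂, V₂, hV₂, hyV₂, hP₂C, hP₂⟩ := exists_projFamily hsub hqS
  set Φ : Euc n × Euc n → Euc n × Euc n := fun z =>
    (-(P₁ z.1 (‖z.1 - z.2‖⁻¹ • (z.1 - z.2))), -(P₂ z.2 (‖z.2 - z.1‖⁻¹ • (z.2 - z.1)))) with hΦdef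
  have hone : (1 : WithTop ℕ∞) ≤ ((⊤ : ℕ∞) : WithTop ℕ∞) := by exact_mod_cast le_top
  have happly : ContDiff ℝ 1
      (fun p : (Euc n →L[ℝ] Euc n) × Euc n => p.1 p.2) :=
    isBoundedBilinearMap_apply.contDiff
  have hΦC : ContDiffAt ℝ 1 Φ (x, y) := by
    have hsub1 : ContDiffAt ℝ 1 (fun z : Euc n × Euc n => z.1 - z.2) (x, y) :=
      (contDiffAt_fst.sub contDiffAt_snd)
    have hsub2 : ContDiffAt ℝ 1 (fun z : Euc n × Euc n => z.2 - z.1) (x, y) :=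
      (contDiffAt_snd.sub contDiffAt_fst)
    have hvec1 : ContDiffAt ℝ 1 (fun z : Euc n × Euc n => ‖z.1 - z.2‖⁻¹ • (z.1 - z.2)) (x, y) := by
      refine ContDiffAt.fun_smul (ContDiffAt.fun_inv ?_ ?_) hsub1
      · exact hsub1.norm ℝ (sub_ne_zero.mpr hpq)
      · simpa using norm_ne_zero_iff.mpr (sub_ne_zero.mpr hpq)
    have hvec2 : ContDiffAt ℝ 1 (fun z : Euc n × Euc n => ‖z.2 - z.1‖⁻¹ • (z.2 - z.1)) (x, y) := by
      refine ContDiffAt.fun_smul (ContDiffAt.fun_inv ?_ ?_) hsub2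
      · exact hsub2.norm ℝ (sub_ne_zero.mpr (Ne.symm hpq))
      · simpa using norm_ne_zero_iff.mpr (sub_ne_zero.mpr (Ne.symm hpq))
    have hc1 : ContDiffAt ℝ 1
        (fun z : Euc n × Euc n => P₁ z.1 (‖z.1 - z.2‖⁻¹ • (z.1 - z.2))) (x, y) := by
      refine happly.contDiffAt.comp (x, y) (ContDiffAt.prodMk ?_ hvec1)
      exact ContDiffAt.comp (x, y) ((hP₁C.of_le hone)) contDiffAt_fst
    have hc2 : ContDiffAt ℝ 1
        (fun z : Euc n × Euc n => P₂ z.2 (‖z.2 - z.1‖⁻¹ • (z.2 - z.1))) (x, y) := by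
      refine happly.contDiffAt.comp (x, y) (ContDiffAt.prodMk ?_ hvec2)
      exact ContDiffAt.comp (x, y) ((hP₂C.of_le hone)) contDiffAt_snd
    exact (hc1.neg).prodMk (hc2.neg)
  obtain ⟨K, tnb, htnb, hlipΦ⟩ := hΦC.exists_lipschitzOnWith
  obtain ⟨r₀, hr₀, hball⟩ := Metric.mem_nhds_iff.mp htnb
  obtain ⟨r₁, hr₁, hballV₁⟩ := Metric.isOpen_iff.mp hV₁ x hxV₁
  obtain ⟨r₂, hr₂, hballV₂⟩ := Metric.isOpen_iff.mp hV₂ y hyV₂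
  set r : ℝ := min r₀ (min r₁ r₂) with hrdef
  have hr : 0 < r := lt_min hr₀ (lt_min hr₁ hr₂)
  set s₀ : Set (Euc n × Euc n) := (S ∩ ball x r) ×ˢ (S ∩ ball y r) with hs₀def
  have hs₀sub : s₀ ⊆ tnb := by
    intro z hz
    apply hball
    rw [← ball_prod_same]
    exact ⟨ball_subset_ball (min_le_left _ _) hz.1.2, ball_subset_ball (min_le_left _ _) hz.2.2⟩
  have hEq : ∀ z ∈ s₀, VF T z = Φ z := by
    intro z hz
    have h1 : z.1 ∈ S ∩ V₁ :=
      ⟨hz.1.1, hballV₁ (ball_subset_ball ((min_le_right _ _).trans (min_le_left _ _)) hz.1.2)⟩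
    have h2 : z.2 ∈ S ∩ V₂ :=
      ⟨hz.2.1, hballV₂ (ball_subset_ball ((min_le_right _ _).trans (min_le_right _ _)) hz.2.2)⟩
    have e1 : conormalT T z.1 z.2 = P₁ z.1 (‖z.1 - z.2‖⁻¹ • (z.1 - z.2)) :=
      (hP₁ z.1 h1 _).symm
    have e2 : conormalT T z.2 z.1 = P₂ z.2 (‖z.2 - z.1‖⁻¹ • (z.2 - z.1)) :=
      (hP₂ z.2 h2 _).symm
    show (-(conormalT T z.1 z.2), -(conormalT T z.2 z.1)) = _
    rw [e1, e2]
  have hlipV : LipschitzOnWith K (VF T) s₀ := by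
    intro z hz w hw
    rw [hEq z hz, hEq w hw]
    exact hlipΦ (hs₀sub hz) (hs₀sub hw)
  -- continuity choices
  set X₁ : ℝ → Euc n × Euc n := fun t => (p₁ t, q₁ t) with hX₁def
  set X₂ : ℝ → Euc n × Euc n := fun t => (p₂ t, q₂ t) with hX₂def
  have hX₁cont : ∀ t ∈ Ico 0 ε, ContinuousWithinAt X₁ (Ico 0 ε) t := by
    intro t ht
    exact ((h₁ t ht).2.2.2.1.continuousWithinAt).prodMk ((h₁ t ht).2.2.2.2.continuousWithinAt)
  have hX₂cont : ∀ t ∈ Ico 0 ε, ContinuousWithinAt X₂ (Ico 0 ε) t := by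
    intro t ht
    exact ((h₂ t ht).2.2.2.1.continuousWithinAt).prodMk ((h₂ t ht).2.2.2.2.continuousWithinAt)
  have hX₂τ : X₂ τ = (x, y) := by
    exact Prod.ext hpe.symm hqe.symm
  obtain ⟨δ₁, hδ₁, hδ₁p⟩ := Metric.continuousWithinAt_iff.mp (hX₁cont τ hτ) r hr
  obtain ⟨δ₂, hδ₂, hδ₂p⟩ := Metric.continuousWithinAt_iff.mp (hX₂cont τ hτ) r hr
  set b : ℝ := min (τ + min δ₁ δ₂ / 2) ((τ + ε) / 2) with hbdef
  have hτb : τ < b := by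
    apply lt_min
    · have : 0 < min δ₁ δ₂ / 2 := by positivity
      linarith
    · linarith [hτ.2]
  have hbε : b < ε := by
    apply lt_of_le_of_lt (min_le_right _ _)
    linarith [hτ.2]
  have hIccsub : Icc τ b ⊆ Ico 0 ε := fun t ht => ⟨hτ.1.trans ht.1, lt_of_le_of_lt ht.2 hbε⟩
  have hdistmem : ∀ t ∈ Icc τ b, dist t τ < min δ₁ δ₂ := by
    intro t ht
    rw [Real.dist_eq, abs_of_nonneg (by linarith [ht.1])]
    have hb2 : b ≤ τ + min δ₁ δ₂ / 2 := min_le_left _ _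
    have : min δ₁ δ₂ / 2 < min δ₁ δ₂ := by
      have : 0 < min δ₁ δ₂ := lt_min hδ₁ hδ₂
      linarith
    linarith [ht.2]
  have hX₁mem : ∀ t ∈ Icc τ b, X₁ t ∈ ball (x, y) r := by
    intro t ht
    have := hδ₁p (hIccsub ht) (lt_of_lt_of_le (hdistmem t ht) (min_le_left _ _))
    simpa [mem_ball] using this
  have hX₂mem : ∀ t ∈ Icc τ b, X₂ t ∈ ball (x, y) r := by
    intro t ht
    have := hδ₂p (hIccsub ht) (lt_of_lt_of_le (hdistmem t ht) (min_le_right _ _))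
    rw [hX₂τ] at this
    simpa [mem_ball] using this
  have hmem₁ : ∀ t ∈ Ico τ b, X₁ t ∈ s₀ := by
    intro t ht
    have hb := hX₁mem t (Ico_subset_Icc_self ht)
    rw [← ball_prod_same] at hb
    exact ⟨⟨(h₁ t (hIccsub (Ico_subset_Icc_self ht))).1, hb.1⟩,
      ⟨(h₁ t (hIccsub (Ico_subset_Icc_self ht))).2.1, hb.2⟩⟩
  have hmem₂ : ∀ t ∈ Ico τ b, X₂ t ∈ s₀ := by
    intro t ht
    have hb := hX₂mem t (Ico_subset_Icc_self ht)
    rw [← ball_prod_same] at hb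
    exact ⟨⟨(h₂ t (hIccsub (Ico_subset_Icc_self ht))).1, hb.1⟩,
      ⟨(h₂ t (hIccsub (Ico_subset_Icc_self ht))).2.1, hb.2⟩⟩
  have hIci : ∀ t ∈ Ico τ b, Ico (0:ℝ) ε ∈ 𝓝[Ici t] t := by
    intro t ht
    have htm : t ∈ Ico t ε := ⟨le_rfl, lt_of_lt_of_le ht.2 hbε.le⟩
    exact mem_of_superset (Ico_mem_nhdsGE htm.2) (Ico_subset_Ico_left (hτ.1.trans ht.1))
  have hder₁ : ∀ t ∈ Ico τ b, HasDerivWithinAt X₁ (VF T (X₁ t)) (Ici t) t := by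
    intro t ht
    have htd := h₁ t (hIccsub (Ico_subset_Icc_self ht))
    exact ((htd.2.2.2.1.prodMk htd.2.2.2.2).mono_of_mem_nhdsWithin (hIci t ht))
  have hder₂ : ∀ t ∈ Ico τ b, HasDerivWithinAt X₂ (VF T (X₂ t)) (Ici t) t := by
    intro t ht
    have htd := h₂ t (hIccsub (Ico_subset_Icc_self ht))
    exact ((htd.2.2.2.1.prodMk htd.2.2.2.2).mono_of_mem_nhdsWithin (hIci t ht))
  have hcont₁ : ContinuousOn X₁ (Icc τ b) :=
    fun t ht => (hX₁cont t (hIccsub ht)).mono hIccsub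
  have hcont₂ : ContinuousOn X₂ (Icc τ b) :=
    fun t ht => (hX₂cont t (hIccsub ht)).mono hIccsub
  have heq0 : X₁ τ = X₂ τ := by
    exact Prod.ext hpe hqe
  have hEqOn : EqOn X₁ X₂ (Icc τ b) :=
    ODE_solution_unique_of_mem_Icc_right (v := fun _ => VF T) (s := fun _ => s₀)
      (fun _ _ => hlipV) hcont₁ hder₁ hmem₁ hcont₂ hder₂ hmem₂ heq0
  refine ⟨b, hτb, hbε, fun t ht => ?_⟩
  have := hEqOn ht
  exact ⟨congrArg Prod.fst this, congrArg Prod.snd this⟩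


lemma isCSFOn_mono {dom' dom : Set ℝ} (hss : dom' ⊆ dom) {p q : ℝ → Euc n}
    (h : IsCSFOn S T dom p q) : IsCSFOn S T dom' p q := by
  intro t ht
  obtain ⟨h1, h2, h3, h4, h5⟩ := h t (hss ht)
  exact ⟨h1, h2, h3, h4.mono hss, h5.mono hss⟩

lemma csf_global_unique (hsub : IsSubmanifold n k S T) {ε : ℝ}
    {p₁ q₁ p₂ q₂ : ℝ → Euc n}
    (h₁ : IsCSFOn S T (Ico 0 ε) p₁ q₁) (h₂ : IsCSFOn S T (Ico 0 ε) p₂ q₂)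
    (hp0 : p₁ 0 = p₂ 0) (hq0 : q₁ 0 = q₂ 0) :
    ∀ t ∈ Ico 0 ε, p₁ t = p₂ t ∧ q₁ t = q₂ t := by
  intro t ht
  by_contra hbadt
  set bad : Set ℝ := {s | s ∈ Ico 0 ε ∧ ¬(p₁ s = p₂ s ∧ q₁ s = q₂ s)} with hbaddef
  have hne : bad.Nonempty := ⟨t, ht, hbadt⟩
  have hbdd : BddBelow bad := ⟨0, fun s hs => hs.1.1⟩
  set τ := sInf bad with hτdef
  have hτ0 : 0 ≤ τ := le_csInf hne fun s hs => hs.1.1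
  have hτlt : τ < ε := lt_of_le_of_lt (csInf_le hbdd ⟨ht, hbadt⟩) ht.2
  have hτmem : τ ∈ Ico 0 ε := ⟨hτ0, hτlt⟩
  have hgood : ∀ s, 0 ≤ s → s < τ → p₁ s = p₂ s ∧ q₁ s = q₂ s := by
    intro s h0 hs
    by_contra hc
    exact absurd (csInf_le hbdd ⟨⟨h0, hs.trans hτlt⟩, hc⟩) (not_le.mpr hs)
  set X₁ : ℝ → Euc n × Euc n := fun s => (p₁ s, q₁ s) with hX₁def
  set X₂ : ℝ → Euc n × Euc n := fun s => (p₂ s, q₂ s) with hX₂def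
  have heqτ : p₁ τ = p₂ τ ∧ q₁ τ = q₂ τ := by
    rcases eq_or_lt_of_le hτ0 with h0 | h0
    · rw [← h0]; exact ⟨hp0, hq0⟩
    · have hss : Ico (0:ℝ) τ ⊆ Ico 0 ε := Ico_subset_Ico_right hτlt.le
      have hc₁ : ContinuousWithinAt X₁ (Ico 0 τ) τ :=
        (((h₁ τ hτmem).2.2.2.1.continuousWithinAt).prodMk
          ((h₁ τ hτmem).2.2.2.2.continuousWithinAt)).mono hss
      have hc₂ : ContinuousWithinAt X₂ (Ico 0 τ) τ :=
        (((h₂ τ hτmem).2.2.2.1.continuousWithinAt).prodMk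
          ((h₂ τ hτmem).2.2.2.2.continuousWithinAt)).mono hss
      have hNB : (𝓝[Ico (0:ℝ) τ] τ).NeBot := by
        apply mem_closure_iff_nhdsWithin_neBot.mp
        rw [closure_Ico h0.ne]
        exact right_mem_Icc.mpr h0.le
      have hEqF : X₁ =ᶠ[𝓝[Ico (0:ℝ) τ] τ] X₂ :=
        eventually_nhdsWithin_of_forall fun s hs =>
          Prod.ext (hgood s hs.1 hs.2).1 (hgood s hs.1 hs.2).2
      have h2' : Tendsto X₁ (𝓝[Ico (0:ℝ) τ] τ) (𝓝 (X₂ τ)) := hc₂.congr' hEqF.symm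
      have := tendsto_nhds_unique hc₁ h2'
      exact ⟨congrArg Prod.fst this, congrArg Prod.snd this⟩
  obtain ⟨b, hτb, hbε, hb⟩ := csf_local_unique hsub h₁ h₂ hτmem heqτ.1 heqτ.2
  obtain ⟨s', hs'bad, hs'lt⟩ := (csInf_lt_iff hbdd hne).mp hτb
  have hs'ge : τ ≤ s' := csInf_le hbdd hs'bad
  exact hs'bad.2 (hb s' ⟨hs'ge, hs'lt.le⟩)

lemma ode_bootstrap {E : Type*} [NormedAddCommGroup E] [NormedSpace ℝ E]
    {W : E → E} {O : Set E} (hW : ∀ z ∈ O, ContDiffAt ℝ (⊤ : ℕ∞) W z)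
    {α : ℝ → E} {s : Set ℝ} (hs : UniqueDiffOn ℝ s)
    (hmem : ∀ t ∈ s, α t ∈ O) (hd : ∀ t ∈ s, HasDerivWithinAt α (W (α t)) s t) :
    ContDiffOn ℝ (⊤ : ℕ∞) α s := by
  have key : ∀ m : ℕ, ContDiffOn ℝ m α s := by
    intro m
    induction m with
    | zero =>
      rw [show ((0 : ℕ) : WithTop ℕ∞) = 0 from rfl, contDiffOn_zero]
      exact fun t ht => (hd t ht).continuousWithinAt
    | succ m ih =>
      rw [show ((m + 1 : ℕ) : WithTop ℕ∞) = (m : WithTop ℕ∞) + 1 from by exact_mod_cast rfl,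
        contDiffOn_succ_iff_derivWithin hs]
      refine ⟨fun t ht => (hd t ht).differentiableWithinAt, ?_, ?_⟩
      · intro h
        exact absurd h (by exact_mod_cast (by simp))
      · have hdW : ∀ t ∈ s, derivWithin α s t = W (α t) :=
          fun t ht => (hd t ht).derivWithin (hs t ht)
        refine ContDiffOn.congr ?_ hdW
        intro t ht
        exact ContDiffAt.comp_contDiffWithinAt t
          ((hW _ (hmem t ht)).of_le (by exact_mod_cast le_top)) (ih t ht)
  rw [show ((⊤ : ℕ∞) : WithTop ℕ∞) = (⊤ : ℕ∞) from rfl, contDiffOn_infty]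
  exact key

lemma csf_exists (hsub : IsSubmanifold n k S T) {p₀ q₀ : Euc n}
    (hp₀ : p₀ ∈ S) (hq₀ : q₀ ∈ S) (hne : p₀ ≠ q₀) :
    ∃ ε : ℝ, 0 < ε ∧ ∃ p q : ℝ → Euc n,
      IsCSFOn S T (Set.Ico 0 ε) p q ∧ p 0 = p₀ ∧ q 0 = q₀ ∧
      ContDiffOn ℝ (⊤ : ℕ∞) p (Set.Ico 0 ε) ∧ ContDiffOn ℝ (⊤ : ℕ∞) q (Set.Ico 0 ε) := by
  obtain ⟨f, g, a₀, u₂, V, hu₂, ha₀, hfa₀, hV, hxV, himg, hfC, hfd, hder, hgC, hgx, hginv⟩ :=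
    exists_chart hsub hp₀
  obtain ⟨f', g', b₀, u₂', V', hu₂', hb₀, hfb₀, hV', hyV', himg', hfC', hfd', hder',
    hgC', hgx', hginv'⟩ := exists_chart hsub hq₀
  set W : Euc k × Euc k → Euc k × Euc k := fun z =>
    (-(pinv (fderiv ℝ f z.1) (‖f z.1 - f' z.2‖⁻¹ • (f z.1 - f' z.2))),
     -(pinv (fderiv ℝ f' z.2) (‖f' z.2 - f z.1‖⁻¹ • (f' z.2 - f z.1)))) with hWdef
  set O : Set (Euc k × Euc k) := {z | z.1 ∈ u₂ ∧ z.2 ∈ u₂' ∧ f z.1 ≠ f' z.2} with hOdef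
  have hone : (1 : WithTop ℕ∞) ≤ ((⊤ : ℕ∞) : WithTop ℕ∞) := by exact_mod_cast le_top
  have hOopen : IsOpen O := by
    rw [isOpen_iff_mem_nhds]
    intro z hz
    have hcf : ContinuousAt (fun z : Euc k × Euc k => f z.1) z :=
      ((hfC _ hz.1).continuousAt).comp continuousAt_fst
    have hcf' : ContinuousAt (fun z : Euc k × Euc k => f' z.2) z :=
      ((hfC' _ hz.2.1).continuousAt).comp continuousAt_snd
    have hcd : ContinuousAt (fun z : Euc k × Euc k => f z.1 - f' z.2) z := hcf.sub hcf'
    have hne0 : (fun z : Euc k × Euc k => f z.1 - f' z.2) z ≠ 0 :=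
      sub_ne_zero.mpr hz.2.2
    have h3 : {z : Euc k × Euc k | f z.1 ≠ f' z.2} ∈ 𝓝 z := by
      have := hcd.preimage_mem_nhds (isOpen_compl_singleton.mem_nhds hne0)
      filter_upwards [this] with w hw
      exact sub_ne_zero.mp hw
    have h1 : {z : Euc k × Euc k | z.1 ∈ u₂} ∈ 𝓝 z :=
      continuousAt_fst.preimage_mem_nhds (hu₂.mem_nhds hz.1)
    have h2 : {z : Euc k × Euc k | z.2 ∈ u₂'} ∈ 𝓝 z :=
      continuousAt_snd.preimage_mem_nhds (hu₂'.mem_nhds hz.2.1)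
    filter_upwards [h1, h2, h3] with w hw1 hw2 hw3
    exact ⟨hw1, hw2, hw3⟩
  have hWC : ∀ z ∈ O, ContDiffAt ℝ (⊤ : ℕ∞) W z := by
    intro z hz
    have hF1 : ContDiffAt ℝ (⊤ : ℕ∞) (fun z : Euc k × Euc k => f z.1) z :=
      (hfC _ hz.1).comp z contDiffAt_fst
    have hF2 : ContDiffAt ℝ (⊤ : ℕ∞) (fun z : Euc k × Euc k => f' z.2) z :=
      (hfC' _ hz.2.1).comp z contDiffAt_snd
    have hsub1 : ContDiffAt ℝ (⊤ : ℕ∞) (fun z : Euc k × Euc k => f z.1 - f' z.2) z :=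
      hF1.sub hF2
    have hsub2 : ContDiffAt ℝ (⊤ : ℕ∞) (fun z : Euc k × Euc k => f' z.2 - f z.1) z :=
      hF2.sub hF1
    have hne1 : f z.1 - f' z.2 ≠ 0 := sub_ne_zero.mpr hz.2.2
    have hne2 : f' z.2 - f z.1 ≠ 0 := sub_ne_zero.mpr (Ne.symm hz.2.2)
    have hvec1 : ContDiffAt ℝ (⊤ : ℕ∞)
        (fun z : Euc k × Euc k => ‖f z.1 - f' z.2‖⁻¹ • (f z.1 - f' z.2)) z := by
      refine ContDiffAt.smul (ContDiffAt.inv (hsub1.norm ℝ hne1) ?_) hsub1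
      simpa using norm_ne_zero_iff.mpr hne1
    have hvec2 : ContDiffAt ℝ (⊤ : ℕ∞)
        (fun z : Euc k × Euc k => ‖f' z.2 - f z.1‖⁻¹ • (f' z.2 - f z.1)) z := by
      refine ContDiffAt.smul (ContDiffAt.inv (hsub2.norm ℝ hne2) ?_) hsub2
      simpa using norm_ne_zero_iff.mpr hne2
    have hdf1 : ContDiffAt ℝ (⊤ : ℕ∞) (fun z : Euc k × Euc k => fderiv ℝ f z.1) z :=
      (hfd _ hz.1).comp z contDiffAt_fst
    have hdf2 : ContDiffAt ℝ (⊤ : ℕ∞) (fun z : Euc k × Euc k => fderiv ℝ f' z.2) z :=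
      (hfd' _ hz.2.1).comp z contDiffAt_snd
    have hpinv1 : ContDiffAt ℝ (⊤ : ℕ∞)
        (fun z : Euc k × Euc k => pinv (fderiv ℝ f z.1)) z :=
      ContDiffAt.comp z (contDiffAt_pinv (hder _ hz.1).1) hdf1
    have hpinv2 : ContDiffAt ℝ (⊤ : ℕ∞)
        (fun z : Euc k × Euc k => pinv (fderiv ℝ f' z.2)) z :=
      ContDiffAt.comp z (contDiffAt_pinv (hder' _ hz.2.1).1) hdf2
    have happly : ContDiff ℝ (⊤ : ℕ∞)
        (fun p : (Euc n →L[ℝ] Euc k) × Euc n => p.1 p.2) :=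
      isBoundedBilinearMap_apply.contDiff
    have hc1 : ContDiffAt ℝ (⊤ : ℕ∞)
        (fun z : Euc k × Euc k =>
          pinv (fderiv ℝ f z.1) (‖f z.1 - f' z.2‖⁻¹ • (f z.1 - f' z.2))) z :=
      happly.contDiffAt.comp z (hpinv1.prodMk hvec1)
    have hc2 : ContDiffAt ℝ (⊤ : ℕ∞)
        (fun z : Euc k × Euc k =>
          pinv (fderiv ℝ f' z.2) (‖f' z.2 - f z.1‖⁻¹ • (f' z.2 - f z.1))) z :=
      happly.contDiffAt.comp z (hpinv2.prodMk hvec2)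
    exact (hc1.neg).prodMk (hc2.neg)
  have hz₀ : ((a₀, b₀) : Euc k × Euc k) ∈ O := by
    refine ⟨ha₀, hb₀, ?_⟩
    rw [hfa₀, hfb₀]; exact hne
  obtain ⟨α, hα0, ε₀, hε₀, hαd⟩ :=
    ContDiffAt.exists_forall_mem_closedBall_exists_eq_forall_mem_Ioo_hasDerivAt₀ ((hWC _ hz₀).of_le hone) 0
  have h0mem : (0:ℝ) ∈ Ioo (0 - ε₀) (0 + ε₀) := by constructor <;> simp [hε₀] <;> linarith
  have hαcont0 : ContinuousAt α 0 := (hαd 0 h0mem).continuousAt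
  have hpre : α ⁻¹' O ∈ 𝓝 (0:ℝ) := by
    apply hαcont0.preimage_mem_nhds
    rw [hα0]
    exact hOopen.mem_nhds hz₀
  obtain ⟨δ₁, hδ₁, hδball⟩ := Metric.mem_nhds_iff.mp hpre
  set δ : ℝ := min δ₁ ε₀ with hδdef
  have hδ : 0 < δ := lt_min hδ₁ hε₀
  have hmemO : ∀ t ∈ Ico (0:ℝ) δ, α t ∈ O := by
    intro t ht
    apply hδball
    rw [Real.ball_eq_Ioo]
    constructor
    · have := ht.1; have := hδ₁; simp only [zero_sub]; linarith
    · have := ht.2; simp only [zero_add]; exact lt_of_lt_of_le this (min_le_left _ _)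
  have hαd' : ∀ t ∈ Ico (0:ℝ) δ, HasDerivAt α (W (α t)) t := by
    intro t ht
    apply hαd
    constructor
    · have := ht.1; have := hε₀; simp only [zero_sub]; linarith
    · have := ht.2; simp only [zero_add]; exact lt_of_lt_of_le this (min_le_right _ _)
  set p : ℝ → Euc n := fun t => f (α t).1 with hpdef
  set q : ℝ → Euc n := fun t => f' (α t).2 with hqdef
  have hmemS : ∀ t ∈ Ico (0:ℝ) δ, p t ∈ S ∧ q t ∈ S ∧ p t ≠ q t := by
    intro t ht
    obtain ⟨h1, h2, h3⟩ := hmemO t ht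
    refine ⟨?_, ?_, h3⟩
    · have : p t ∈ f '' u₂ := ⟨(α t).1, h1, rfl⟩
      rw [himg] at this; exact this.1
    · have : q t ∈ f' '' u₂' := ⟨(α t).2, h2, rfl⟩
      rw [himg'] at this; exact this.1
  have hda : ∀ t ∈ Ico (0:ℝ) δ, HasDerivAt (fun s => (α s).1) (W (α t)).1 t := by
    intro t ht
    exact (ContinuousLinearMap.fst ℝ (Euc k) (Euc k)).hasFDerivAt.comp_hasDerivAt t (hαd' t ht)
  have hdb : ∀ t ∈ Ico (0:ℝ) δ, HasDerivAt (fun s => (α s).2) (W (α t)).2 t := by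
    intro t ht
    exact (ContinuousLinearMap.snd ℝ (Euc k) (Euc k)).hasFDerivAt.comp_hasDerivAt t (hαd' t ht)
  have hdp : ∀ t ∈ Ico (0:ℝ) δ, HasDerivAt p (-(conormalT T (p t) (q t))) t := by
    intro t ht
    obtain ⟨h1, h2, h3⟩ := hmemO t ht
    have hfder : HasFDerivAt f (fderiv ℝ f (α t).1) (α t).1 :=
      ((hfC _ h1).differentiableAt (by simp)).hasFDerivAt
    have hcomp := hfder.comp_hasDerivAt t (hda t ht)
    have hval : fderiv ℝ f (α t).1 ((W (α t)).1) = -(conormalT T (p t) (q t)) := by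
      show fderiv ℝ f (α t).1
        (-(pinv (fderiv ℝ f (α t).1) (‖f (α t).1 - f' (α t).2‖⁻¹ • (f (α t).1 - f' (α t).2))))
        = _
      rw [map_neg, apply_pinv_eq_proj (hder _ h1).1, (hder _ h1).2]
      rfl
    rw [hval] at hcomp
    exact hcomp
  have hdq : ∀ t ∈ Ico (0:ℝ) δ, HasDerivAt q (-(conormalT T (q t) (p t))) t := by
    intro t ht
    obtain ⟨h1, h2, h3⟩ := hmemO t ht
    have hfder : HasFDerivAt f' (fderiv ℝ f' (α t).2) (α t).2 :=
      ((hfC' _ h2).differentiableAt (by simp)).hasFDerivAt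
    have hcomp := hfder.comp_hasDerivAt t (hdb t ht)
    have hval : fderiv ℝ f' (α t).2 ((W (α t)).2) = -(conormalT T (q t) (p t)) := by
      show fderiv ℝ f' (α t).2
        (-(pinv (fderiv ℝ f' (α t).2) (‖f' (α t).2 - f (α t).1‖⁻¹ • (f' (α t).2 - f (α t).1))))
        = _
      rw [map_neg, apply_pinv_eq_proj (hder' _ h2).1, (hder' _ h2).2]
      rfl
    rw [hval] at hcomp
    exact hcomp
  have hCSF : IsCSFOn S T (Set.Ico 0 δ) p q := by
    intro t ht
    obtain ⟨h1, h2, h3⟩ := hmemS t ht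
    exact ⟨h1, h2, h3, (hdp t ht).hasDerivWithinAt, (hdq t ht).hasDerivWithinAt⟩
  -- smoothness of α on Ico 0 δ
  have hαsmooth : ContDiffOn ℝ (⊤ : ℕ∞) α (Ico 0 δ) := by
    refine ode_bootstrap hWC (uniqueDiffOn_Ico 0 δ) hmemO ?_
    exact fun t ht => (hαd' t ht).hasDerivWithinAt
  have hasm : ContDiffOn ℝ (⊤ : ℕ∞) (fun s => (α s).1) (Ico 0 δ) :=
    (ContinuousLinearMap.fst ℝ (Euc k) (Euc k)).contDiff.comp_contDiffOn hαsmooth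
  have hbsm : ContDiffOn ℝ (⊤ : ℕ∞) (fun s => (α s).2) (Ico 0 δ) :=
    (ContinuousLinearMap.snd ℝ (Euc k) (Euc k)).contDiff.comp_contDiffOn hαsmooth
  have hfOn : ContDiffOn ℝ (⊤ : ℕ∞) f u₂ := fun a ha => (hfC a ha).contDiffWithinAt
  have hfOn' : ContDiffOn ℝ (⊤ : ℕ∞) f' u₂' := fun a ha => (hfC' a ha).contDiffWithinAt
  have hpsm : ContDiffOn ℝ (⊤ : ℕ∞) p (Set.Ico 0 δ) :=
    hfOn.comp hasm (fun t ht => (hmemO t ht).1)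
  have hqsm : ContDiffOn ℝ (⊤ : ℕ∞) q (Set.Ico 0 δ) :=
    hfOn'.comp hbsm (fun t ht => (hmemO t ht).2.1)
  refine ⟨δ, hδ, p, q, hCSF, ?_, ?_, hpsm, hqsm⟩
  · show f (α 0).1 = p₀
    rw [hα0]
    exact hfa₀
  · show f' (α 0).2 = q₀
    rw [hα0]
    exact hfb₀

end ChordAux

/-- **Short-time existence and uniqueness** of the chord shortening flow with given initial
chord, relative to a compact smooth embedded submanifold `S ⊆ ℝⁿ`. -/
theorem chord_statement_2 (n k : ℕ) (S : Set (Euc n)) (T : Euc n → Submodule ℝ (Euc n))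
    (hsub : IsSubmanifold n k S T) (hcpt : IsCompact S)
    (p₀ q₀ : Euc n) (hp₀ : p₀ ∈ S) (hq₀ : q₀ ∈ S) (hne : p₀ ≠ q₀) :
    (∃ ε : ℝ, 0 < ε ∧ ∃ p q : ℝ → Euc n,
      IsCSFOn S T (Set.Ico 0 ε) p q ∧ p 0 = p₀ ∧ q 0 = q₀ ∧
      ContDiffOn ℝ (⊤ : ℕ∞) p (Set.Ico 0 ε) ∧ ContDiffOn ℝ (⊤ : ℕ∞) q (Set.Ico 0 ε)) ∧
    ∀ (ε₁ ε₂ : ℝ) (p₁ q₁ p₂ q₂ : ℝ → Euc n),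
      IsCSFOn S T (Set.Ico 0 ε₁) p₁ q₁ → IsCSFOn S T (Set.Ico 0 ε₂) p₂ q₂ →
      p₁ 0 = p₀ → q₁ 0 = q₀ → p₂ 0 = p₀ → q₂ 0 = q₀ →
      ∀ t ∈ Set.Ico 0 ε₁ ∩ Set.Ico 0 ε₂, p₁ t = p₂ t ∧ q₁ t = q₂ t := by
  constructor
  · exact ChordAux.csf_exists hsub hp₀ hq₀ hne
  · intro ε₁ ε₂ p₁ q₁ p₂ q₂ h₁ h₂ hp₁ hq₁ hp₂ hq₂ t ht
    have h₁' := ChordAux.isCSFOn_mono (Set.Ico_subset_Ico_right (min_le_left ε₁ ε₂)) h₁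
    have h₂' := ChordAux.isCSFOn_mono (Set.Ico_subset_Ico_right (min_le_right ε₁ ε₂)) h₂
    have ht' : t ∈ Set.Ico 0 (min ε₁ ε₂) := ⟨ht.1.1, lt_min ht.1.2 ht.2.2⟩
    exact ChordAux.csf_global_unique hsub h₁' h₂' (hp₁.trans hp₂.symm) (hq₁.trans hq₂.symm) t ht'

end
end

section
/- Let Σ ⊂ ℝⁿ be a compact smooth embedded k-dimensional submanifold without boundary and let (p,q) : [0,T) → Σ × Σ be a chord shortening flow relative to Σ. Then (1/2) d/dt ‖η^T‖² = −(ℓ/2) ‖Δ^{1/2} η^T‖² + (1/ℓ) ‖η^T‖⁴ − ⟨A(η^T(p), η^T(p)), η(p)⟩ − ⟨A(η^T(q), η^T(q)), η(q)⟩, where ‖Δ^{1/2} η^T‖² = 2|η^T(p) − η^T(q)|²/ℓ². -/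
open scoped RealInnerProductSpace ENNReal
open Set Filter

noncomputable section

open Metric ContinuousLinearMap Topology

section ChordAux

variable {n k : ℕ}

lemma projSM_eq_star (K : Submodule ℝ (Euc n)) (w : Euc n) : projSM K w = K.starProjection w := rfl

lemma projSM_mem (K : Submodule ℝ (Euc n)) (w : Euc n) : projSM K w ∈ K := (K.orthogonalProjectionOnto w).2

lemma projSM_of_mem {K : Submodule ℝ (Euc n)} {w : Euc n} (h : w ∈ K) : projSM K w = w := by
  rw [projSM_eq_star]; exact Submodule.starProjection_eq_self_iff.2 h

lemma projSM_inner_left (K : Submodule ℝ (Euc n)) (w w' : Euc n) :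
    ⟪projSM K w, w'⟫ = ⟪w, projSM K w'⟫ :=
  by rw [projSM_eq_star, projSM_eq_star]; exact Submodule.inner_starProjection_left_eq_right (K := K) w w'

lemma inner_projSM_self (K : Submodule ℝ (Euc n)) (w : Euc n) :
    ⟪w, projSM K w⟫ = ‖projSM K w‖ ^ 2 := by
  rw [real_inner_comm, ← real_inner_self_eq_norm_sq]
  have h0 : ⟪projSM K w, w - projSM K w⟫ = 0 :=
    (Submodule.mem_orthogonal K (w - projSM K w)).1 (by rw [projSM_eq_star]; exact Submodule.sub_starProjection_mem_orthogonal (K := K) w) _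
      (projSM_mem K w)
  rw [inner_sub_right] at h0
  linarith

lemma isUnit_gram (B : Euc k →L[ℝ] Euc n) (hB : Function.Injective B) :
    IsUnit ((ContinuousLinearMap.adjoint B).comp B) := by
  set G := (ContinuousLinearMap.adjoint B).comp B with hG
  have hGinj : Function.Injective G := by
    intro ξ ζ h
    have h' : G (ξ - ζ) = 0 := by rw [map_sub, h, sub_self]
    have h2 : ⟪G (ξ - ζ), ξ - ζ⟫ = 0 := by rw [h']; simp
    rw [ContinuousLinearMap.comp_apply, ContinuousLinearMap.adjoint_inner_left] at h2
    have h3 : B (ξ - ζ) = 0 := inner_self_eq_zero.mp h2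
    have h4 : ξ - ζ = 0 := hB (by simpa using h3)
    exact sub_eq_zero.mp h4
  have hGsurj : Function.Surjective G :=
    LinearMap.injective_iff_surjective.mp hGinj
  let e : Euc k ≃ₗ[ℝ] Euc k := LinearEquiv.ofBijective (G : Euc k →ₗ[ℝ] Euc k) ⟨hGinj, hGsurj⟩
  let e' : Euc k ≃L[ℝ] Euc k := e.toContinuousLinearEquiv
  have he' : (e' : Euc k →L[ℝ] Euc k) = G := by
    ext ξ; rfl
  exact he' ▸ (ContinuousLinearEquiv.toUnit e').isUnit

/-- The projection formula `B (B*B)⁻¹ B* = π_{range B}`. -/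
lemma gram_proj_formula (B : Euc k →L[ℝ] Euc n) (hB : Function.Injective B) (w : Euc n) :
    B (Ring.inverse ((ContinuousLinearMap.adjoint B).comp B) ((ContinuousLinearMap.adjoint B) w))
      = projSM (LinearMap.range (B : Euc k →ₗ[ℝ] Euc n)) w := by
  set G := (ContinuousLinearMap.adjoint B).comp B with hG
  obtain ⟨u, hu⟩ := isUnit_gram B hB
  set ξ := Ring.inverse G ((ContinuousLinearMap.adjoint B) w) with hξ
  rw [← hG] at hu
  have hGξ : G ξ = (ContinuousLinearMap.adjoint B) w := by
    rw [hξ, ← hu, Ring.inverse_unit]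
    show (u * ((u⁻¹ : (Euc k →L[ℝ] Euc k)ˣ) : Euc k →L[ℝ] Euc k)) _ = _
    simp
  symm
  rw [projSM_eq_star]
  apply Submodule.eq_starProjection_of_mem_orthogonal
  · exact LinearMap.mem_range.2 ⟨ξ, rfl⟩
  · intro z hz
    obtain ⟨ζ, rfl⟩ := LinearMap.mem_range.1 hz
    have : ⟪w - B ξ, B ζ⟫ = ⟪(ContinuousLinearMap.adjoint B) (w - B ξ), ζ⟫ := by
      rw [ContinuousLinearMap.adjoint_inner_left]
    have h2 : (ContinuousLinearMap.adjoint B) (w - B ξ) = 0 := by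
      rw [map_sub, ← ContinuousLinearMap.comp_apply, ← hG, hGξ, sub_self]
    rw [real_inner_comm]
    show (⟪w - B ξ, B ζ⟫ : ℝ) = 0
    rw [this, h2]
    simp

section Pmap
variable (n k)

/-- `B ↦ B (B^*B)⁻¹ B^*`, the orthogonal projection onto `range B` when `B` is injective. -/
def Pmap (B : Euc k →L[ℝ] Euc n) : Euc n →L[ℝ] Euc n :=
  (B.comp (Ring.inverse ((ContinuousLinearMap.adjoint B).comp B))).comp
    (ContinuousLinearMap.adjoint B)

variable {n k}

lemma contDiff_adjoint :
    ContDiff ℝ (⊤ : ℕ∞) (fun B : Euc k →L[ℝ] Euc n => ContinuousLinearMap.adjoint B) := by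
  apply IsBoundedLinearMap.contDiff
  refine ⟨⟨fun B C => ?_, fun c B => ?_⟩, 1, one_pos, fun B => ?_⟩
  · exact map_add (ContinuousLinearMap.adjoint (𝕜 := ℝ) (E := Euc k) (F := Euc n)).toLinearEquiv B C
  · have := (ContinuousLinearMap.adjoint (𝕜 := ℝ) (E := Euc k) (F := Euc n)).map_smulₛₗ c B
    simpa [starRingEnd_apply] using this
  · rw [one_mul]
    exact le_of_eq (LinearIsometryEquiv.norm_map _ B)

lemma contDiffAt_Pmap {B₀ : Euc k →L[ℝ] Euc n} (hB : Function.Injective B₀) :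
    ContDiffAt ℝ (⊤ : ℕ∞) (Pmap n k) B₀ := by
  obtain ⟨u, hu⟩ := isUnit_gram B₀ hB
  have hgram : ContDiffAt ℝ (⊤ : ℕ∞)
      (fun B : Euc k →L[ℝ] Euc n => (ContinuousLinearMap.adjoint B).comp B) B₀ :=
    (contDiff_adjoint.clm_comp contDiff_id).contDiffAt
  have hinv : ContDiffAt ℝ (⊤ : ℕ∞)
      (fun B : Euc k →L[ℝ] Euc n =>
        Ring.inverse ((ContinuousLinearMap.adjoint B).comp B)) B₀ := by
    have h1 : ContDiffAt ℝ (⊤ : ℕ∞) (Ring.inverse : (Euc k →L[ℝ] Euc k) → _)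
        ((ContinuousLinearMap.adjoint B₀).comp B₀) := by
      rw [← hu]
      exact contDiffAt_ringInverse (𝕜 := ℝ) u
    exact ContDiffAt.comp (g := Ring.inverse)
      (f := fun B : Euc k →L[ℝ] Euc n => (ContinuousLinearMap.adjoint B).comp B) B₀ h1 hgram
  exact (((contDiff_id.contDiffAt).clm_comp hinv).clm_comp contDiff_adjoint.contDiffAt)

lemma Pmap_eq_projSM {B : Euc k →L[ℝ] Euc n} (hB : Function.Injective B) (w : Euc n) :
    Pmap n k B w = projSM (LinearMap.range (B : Euc k →ₗ[ℝ] Euc n)) w := by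
  rw [← gram_proj_formula B hB w]; rfl

end Pmap

lemma inner_projSM_of_mem {K : Submodule ℝ (Euc n)} {a : Euc n} (ha : a ∈ K) (w : Euc n) :
    ⟪a, projSM K w⟫ = ⟪a, w⟫ := by
  rw [real_inner_comm, projSM_inner_left, projSM_of_mem ha, real_inner_comm]

lemma exists_smooth_proj {S : Set (Euc n)} {T : Euc n → Submodule ℝ (Euc n)}
    (hsub : IsSubmanifold n k S T) {x : Euc n} (hx : x ∈ S) :
    ∃ ε > 0, ∃ Pr : Euc n → (Euc n →L[ℝ] Euc n),
      ContDiffAt ℝ (⊤ : ℕ∞) Pr x ∧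
      ∀ z ∈ S ∩ ball x ε, ∀ w, Pr z w = projSM (T z) w := by
  obtain ⟨f, u, v, hu, hv, hxv, hf, hinj, himg, hopen, hder⟩ := hsub x hx
  obtain ⟨c₀, hc₀u, hfc₀⟩ : ∃ c₀ ∈ u, f c₀ = x := by
    have h1 : x ∈ f '' u := himg ▸ ⟨hx, hxv⟩
    obtain ⟨c₀, h1, h2⟩ := h1; exact ⟨c₀, h1, h2⟩
  set df := fun y => fderiv ℝ f y with hdf_def
  have hdf : ContDiffOn ℝ (⊤ : ℕ∞) df u := hf.fderiv_of_isOpen hu (by simp)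
  have hTx : LinearMap.range ((df c₀ : Euc k →L[ℝ] Euc n) : Euc k →ₗ[ℝ] Euc n) = T x :=
    hfc₀ ▸ (hder c₀ hc₀u).2
  have hdfinj : Function.Injective (df c₀) := (hder c₀ hc₀u).1
  set K := T x with hK
  -- the ambient extension of the chart and its inverse
  set F : Euc k × ↥(Kᗮ) → Euc n := fun yw => f yw.1 + (yw.2 : Euc n) with hF_def
  have hrange : ∀ ξ, df c₀ ξ ∈ K := fun ξ => hTx ▸ LinearMap.mem_range_self _ ξ
  set L : (Euc k × ↥(Kᗮ)) →L[ℝ] Euc n :=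
    (df c₀).coprod (Submodule.subtypeL Kᗮ) with hL_def
  have hLapp : ∀ yw : Euc k × ↥(Kᗮ), L yw = df c₀ yw.1 + (yw.2 : Euc n) := fun yw => rfl
  have hLbij : Function.Bijective L := by
    constructor
    · intro a b hab
      rw [hLapp, hLapp] at hab
      have h0 : df c₀ (a.1 - b.1) = ((b.2 - a.2 : ↥(Kᗮ)) : Euc n) := by
        rw [map_sub]
        push_cast
        linear_combination (norm := module) hab
      have hmem : df c₀ (a.1 - b.1) ∈ K ⊓ Kᗮ := by
        refine ⟨hrange _, ?_⟩
        rw [h0]; exact SetLike.coe_mem _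
      rw [Submodule.inf_orthogonal_eq_bot K, Submodule.mem_bot] at hmem
      have h1 : a.1 = b.1 := sub_eq_zero.mp (hdfinj (by rw [hmem, map_zero]))
      have h2 : a.2 = b.2 := by
        have h3 : ((b.2 - a.2 : ↥(Kᗮ)) : Euc n) = 0 := by rw [← h0, hmem]
        have h4 : (b.2 - a.2 : ↥(Kᗮ)) = 0 := by exact_mod_cast h3
        exact (sub_eq_zero.mp h4).symm
      exact Prod.ext h1 h2
    · intro z
      have hz1 : projSM K z ∈ LinearMap.range ((df c₀ : Euc k →L[ℝ] Euc n) : Euc k →ₗ[ℝ] Euc n) := by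
        rw [hTx]; exact projSM_mem _ _
      obtain ⟨ξ, hξ⟩ := LinearMap.mem_range.1 hz1
      refine ⟨(ξ, ⟨z - projSM K z, by rw [projSM_eq_star]; exact Submodule.sub_starProjection_mem_orthogonal z⟩), ?_⟩
      rw [hLapp]
      show df c₀ ξ + (z - projSM K z) = z
      have hξ' : df c₀ ξ = projSM K z := hξ
      rw [hξ']
      abel
  set e : (Euc k × ↥(Kᗮ)) ≃L[ℝ] Euc n :=
    (LinearEquiv.ofBijective (L : (Euc k × ↥(Kᗮ)) →ₗ[ℝ] Euc n) hLbij).toContinuousLinearEquiv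
    with he_def
  have he : (e : (Euc k × ↥(Kᗮ)) →L[ℝ] Euc n) = L := ContinuousLinearMap.ext fun _ => rfl
  have hfd : DifferentiableAt ℝ f c₀ :=
    (hf.contDiffAt (hu.mem_nhds hc₀u)).differentiableAt (by simp)
  have hFder : HasFDerivAt F (e : (Euc k × ↥(Kᗮ)) →L[ℝ] Euc n) (c₀, (0 : ↥(Kᗮ))) := by
    rw [he]
    have h1 : HasFDerivAt (fun yw : Euc k × ↥(Kᗮ) => f yw.1)
        ((df c₀).comp (fst ℝ (Euc k) ↥(Kᗮ))) (c₀, (0 : ↥(Kᗮ))) :=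
      hfd.hasFDerivAt.comp _ hasFDerivAt_fst
    have h2 : HasFDerivAt (fun yw : Euc k × ↥(Kᗮ) => (yw.2 : Euc n))
        ((Kᗮ.subtypeL).comp (snd ℝ (Euc k) ↥(Kᗮ))) (c₀, (0 : ↥(Kᗮ))) :=
      ((Kᗮ.subtypeL).comp (snd ℝ (Euc k) ↥(Kᗮ))).hasFDerivAt
    have h3 := h1.add h2
    have heq : L = (df c₀).comp (fst ℝ (Euc k) ↥(Kᗮ)) + (Kᗮ.subtypeL).comp (snd ℝ (Euc k) ↥(Kᗮ)) :=
      ContinuousLinearMap.ext fun yw => rfl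
    rw [heq]; exact h3
  have hFsmooth : ContDiffAt ℝ (⊤ : ℕ∞) F (c₀, (0 : ↥(Kᗮ))) := by
    have h1 : ContDiffAt ℝ (⊤ : ℕ∞) (fun yw : Euc k × ↥(Kᗮ) => f yw.1) (c₀, (0 : ↥(Kᗮ))) :=
      (hf.contDiffAt (hu.mem_nhds hc₀u)).comp _ contDiffAt_fst
    have h2 : ContDiffAt ℝ (⊤ : ℕ∞) (fun yw : Euc k × ↥(Kᗮ) => (yw.2 : Euc n))
        (c₀, (0 : ↥(Kᗮ))) :=
      (((Kᗮ.subtypeL).comp (snd ℝ (Euc k) ↥(Kᗮ))).contDiff).contDiffAt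
    exact h1.add h2
  set Ginv := hFsmooth.localInverse hFder (by simp) with hGinv_def
  have hS₀ := hFsmooth.hasStrictFDerivAt' hFder (by simp)
  have hleft : ∀ᶠ yw in 𝓝 (c₀, (0 : ↥(Kᗮ))), Ginv (F yw) = yw := hS₀.eventually_left_inverse
  have hFx : F (c₀, (0 : ↥(Kᗮ))) = x := by
    simp only [hF_def, ZeroMemClass.coe_zero, add_zero, hfc₀]
  have hGx : Ginv x = (c₀, (0 : ↥(Kᗮ))) := by
    rw [← hFx]; exact hS₀.localInverse_apply_image
  set Pr : Euc n → (Euc n →L[ℝ] Euc n) := fun z => Pmap n k (df (Ginv z).1) with hPr_def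
  have hG_at : ContDiffAt ℝ (⊤ : ℕ∞) Ginv x := hFx ▸ hFsmooth.to_localInverse hFder (by simp)
  have h1 : ContDiffAt ℝ (⊤ : ℕ∞) (fun z => (Ginv z).1) x :=
    contDiffAt_fst.comp x hG_at
  have hGx1 : (Ginv x).1 = c₀ := by rw [hGx]
  have h2 : ContDiffAt ℝ (⊤ : ℕ∞) (fun z => df (Ginv z).1) x := by
    refine ContDiffAt.comp x ?_ h1
    show ContDiffAt ℝ (⊤ : ℕ∞) df ((Ginv x).1)
    rw [hGx1]
    exact hdf.contDiffAt (hu.mem_nhds hc₀u)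
  have h3 : ContDiffAt ℝ (⊤ : ℕ∞) (Pmap n k) (df ((Ginv x).1)) := by
    rw [hGx1]; exact contDiffAt_Pmap hdfinj
  have hPrx : ContDiffAt ℝ (⊤ : ℕ∞) Pr x := ContDiffAt.comp (g := Pmap n k) x h3 h2
  -- choose the radius
  have hslice : {y : Euc k | Ginv (F (y, (0 : ↥(Kᗮ)))) = (y, (0 : ↥(Kᗮ)))} ∈ 𝓝 c₀ := by
    have hcont : ContinuousAt (fun y : Euc k => (y, (0 : ↥(Kᗮ)))) c₀ :=
      (continuous_id.prodMk continuous_const).continuousAt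
    exact hcont.preimage_mem_nhds hleft
  obtain ⟨δ, hδpos, hδ⟩ : ∃ δ > 0,
      ball c₀ δ ⊆ u ∩ {y | Ginv (F (y, (0 : ↥(Kᗮ)))) = (y, (0 : ↥(Kᗮ)))} :=
    Metric.mem_nhds_iff.1 (inter_mem (hu.mem_nhds hc₀u) hslice)
  obtain ⟨w, hwopen, hws⟩ := hopen (ball c₀ δ) (fun y hy => (hδ hy).1) isOpen_ball
  have hxw : x ∈ w := by
    have : x ∈ f '' ball c₀ δ := ⟨c₀, mem_ball_self hδpos, hfc₀⟩
    rw [hws] at this; exact this.2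
  obtain ⟨ε, hεpos, hε⟩ : ∃ ε > 0, ball x ε ⊆ w := Metric.mem_nhds_iff.1 (hwopen.mem_nhds hxw)
  refine ⟨ε, hεpos, Pr, hPrx, ?_⟩
  intro z hz wvec
  obtain ⟨y, hys, hfyz⟩ : z ∈ f '' ball c₀ δ := by rw [hws]; exact ⟨hz.1, hε hz.2⟩
  have hFy : F (y, (0 : ↥(Kᗮ))) = f y := by
    simp only [hF_def, ZeroMemClass.coe_zero, add_zero]
  have hGz : Ginv z = (y, (0 : ↥(Kᗮ))) := by
    rw [← hfyz, ← hFy]; exact (hδ hys).2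
  have hyu : y ∈ u := (hδ hys).1
  have hPrz : Pr z = Pmap n k (df y) := by rw [hPr_def]; simp only [hGz]
  rw [hPrz, Pmap_eq_projSM (hder y hyu).1 wvec]
  rw [show LinearMap.range ((df y : Euc k →L[ℝ] Euc n) : Euc k →ₗ[ℝ] Euc n) = T (f y) from
    (hder y hyu).2, hfyz]


lemma norm_sub_deriv {p q : ℝ → Euc n} {dp dq : Euc n} {s : Set ℝ} {t₀ : ℝ}
    (hp : HasDerivWithinAt p dp s t₀) (hq : HasDerivWithinAt q dq s t₀)
    (hne : p t₀ ≠ q t₀) :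
    HasDerivWithinAt (fun t => ‖p t - q t‖)
      (‖p t₀ - q t₀‖⁻¹ * ⟪p t₀ - q t₀, dp - dq⟫) s t₀ := by
  have hr : HasDerivWithinAt (fun t => p t - q t) (dp - dq) s t₀ := hp.sub hq
  have hin : HasDerivWithinAt (fun t => ⟪p t - q t, p t - q t⟫)
      (⟪p t₀ - q t₀, dp - dq⟫ + ⟪dp - dq, p t₀ - q t₀⟫) s t₀ := hr.inner ℝ hr
  have hpos : ⟪p t₀ - q t₀, p t₀ - q t₀⟫ ≠ (0:ℝ) :=
    fun h => (sub_ne_zero.2 hne) (inner_self_eq_zero.1 h)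
  have hsq := hin.sqrt hpos
  have hfun : (fun t => Real.sqrt ⟪p t - q t, p t - q t⟫) = fun t => ‖p t - q t‖ :=
    funext fun t => (norm_eq_sqrt_real_inner (p t - q t)).symm
  rw [hfun] at hsq
  convert hsq using 1
  have hsqrt : Real.sqrt ⟪p t₀ - q t₀, p t₀ - q t₀⟫ = ‖p t₀ - q t₀‖ :=
    (norm_eq_sqrt_real_inner _).symm
  have hℓ : ‖p t₀ - q t₀‖ ≠ 0 := norm_ne_zero_iff.2 (sub_ne_zero.2 hne)
  rw [hsqrt, real_inner_comm (dp - dq)]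
  field_simp
  ring

lemma unitvec_deriv {p q : ℝ → Euc n} {dp dq : Euc n} {s : Set ℝ} {t₀ : ℝ}
    (hp : HasDerivWithinAt p dp s t₀) (hq : HasDerivWithinAt q dq s t₀)
    (hne : p t₀ ≠ q t₀) :
    HasDerivWithinAt (fun t => ‖p t - q t‖⁻¹ • (p t - q t))
      (‖p t₀ - q t₀‖⁻¹ • (dp - dq) +
        (-(‖p t₀ - q t₀‖⁻¹ * ⟪p t₀ - q t₀, dp - dq⟫) / ‖p t₀ - q t₀‖ ^ 2) • (p t₀ - q t₀))
      s t₀ := by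
  have hℓ : ‖p t₀ - q t₀‖ ≠ 0 := norm_ne_zero_iff.2 (sub_ne_zero.2 hne)
  exact ((norm_sub_deriv hp hq hne).inv hℓ).smul (hp.sub hq)

lemma proj_deriv_identities {M : ℝ → (Euc n →L[ℝ] Euc n)} {L : Euc n →L[ℝ] Euc n}
    {s : Set ℝ} {t₀ : ℝ}
    (hM : HasDerivWithinAt M L s t₀) (hud : UniqueDiffWithinAt ℝ s t₀) (ht₀ : t₀ ∈ s)
    (hsym : ∀ t ∈ s, ∀ w w' : Euc n, ⟪M t w, w'⟫ = ⟪w, M t w'⟫)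
    (hidem : ∀ t ∈ s, ∀ w : Euc n, M t (M t w) = M t w) :
    (∀ w w' : Euc n, ⟪L w, w'⟫ = ⟪w, L w'⟫) ∧
    (∀ w : Euc n, M t₀ (L (M t₀ w)) = 0) := by
  have hc1 : ∀ w : Euc n, HasDerivWithinAt (fun t => M t w) (L w) s t₀ := by
    intro w
    simpa using hM.clm_apply (hasDerivWithinAt_const t₀ s w)
  constructor
  · intro w w'
    have h1 : HasDerivWithinAt (fun t => ⟪M t w, w'⟫) (⟪L w, w'⟫) s t₀ := by
      simpa using (hc1 w).inner ℝ (hasDerivWithinAt_const t₀ s w')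
    have h2 : HasDerivWithinAt (fun t => ⟪w, M t w'⟫) (⟪w, L w'⟫) s t₀ := by
      simpa using (hasDerivWithinAt_const t₀ s w).inner ℝ (hc1 w')
    have h2' : HasDerivWithinAt (fun t => ⟪M t w, w'⟫) (⟪w, L w'⟫) s t₀ :=
      h2.congr (fun y hy => hsym y hy w w') (hsym t₀ ht₀ w w')
    exact (h1.derivWithin hud).symm.trans (h2'.derivWithin hud)
  · have key : ∀ w : Euc n, L (M t₀ w) + M t₀ (L w) = L w := by
      intro w
      have hc2 : HasDerivWithinAt (fun t => M t (M t w)) (L (M t₀ w) + M t₀ (L w)) s t₀ :=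
        hM.clm_apply (hc1 w)
      have hc2' : HasDerivWithinAt (fun t => M t w) (L (M t₀ w) + M t₀ (L w)) s t₀ :=
        hc2.congr (fun y hy => (hidem y hy w).symm) (hidem t₀ ht₀ w).symm
      exact (hc2'.derivWithin hud).symm.trans ((hc1 w).derivWithin hud)
    intro w
    have h3 := key (M t₀ w)
    rw [hidem t₀ ht₀ w] at h3
    have : L (M t₀ w) + M t₀ (L (M t₀ w)) = L (M t₀ w) := h3
    linear_combination (norm := module) this

lemma hA_value {S : Set (Euc n)} {T : Euc n → Submodule ℝ (Euc n)}
    {A : Euc n → Euc n → Euc n → Euc n}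
    (hA : ∀ x ∈ S, ∀ u v : Euc n, u ∈ T x → v ∈ T x →
      ∀ V : Euc n → Euc n, DifferentiableAt ℝ V x → (∀ y ∈ S, V y ∈ T y) → V x = v →
        A x u v = fderiv ℝ V x u - projSM (T x) (fderiv ℝ V x u))
    {x : Euc n} (hx : x ∈ S) {ε : ℝ} (hε : 0 < ε) {Pr : Euc n → Euc n →L[ℝ] Euc n}
    (hPrx : ContDiffAt ℝ (⊤ : ℕ∞) Pr x)
    (hPr : ∀ z ∈ S ∩ ball x ε, ∀ w, Pr z w = projSM (T z) w)
    {a : Euc n} (ha : a ∈ T x) :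
    A x a a = (fderiv ℝ Pr x a) a - projSM (T x) ((fderiv ℝ Pr x a) a) := by
  set χ : ContDiffBump x := ⟨ε/2, ε, half_pos hε, half_lt_self hε⟩ with hχ
  set V : Euc n → Euc n := fun z => χ z • Pr z a with hV
  have hPrd : DifferentiableAt ℝ (fun z => Pr z a) x :=
    (hPrx.differentiableAt (by simp)).clm_apply (differentiableAt_const a)
  have hVd : DifferentiableAt ℝ V x :=
    ((χ.contDiffAt (n := 1)).differentiableAt one_ne_zero).smul hPrd
  have htang : ∀ y ∈ S, V y ∈ T y := by
    intro y hy
    by_cases hmem : y ∈ ball x ε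
    · have : V y = χ y • projSM (T y) a := by rw [hV]; simp only [hPr y ⟨hy, hmem⟩ a]
      rw [this]
      exact Submodule.smul_mem _ _ (projSM_mem _ _)
    · have hz : χ y = 0 := by
        apply Function.notMem_support.mp
        rw [χ.support_eq]
        exact hmem
      show χ y • Pr y a ∈ T y
      rw [hz, zero_smul]
      exact Submodule.zero_mem _
  have hχ1 : χ x = 1 := χ.one_of_mem_closedBall (mem_closedBall_self (half_pos hε).le)
  have hVx : V x = a := by
    show χ x • Pr x a = a
    rw [hχ1, one_smul, hPr x ⟨hx, mem_ball_self hε⟩ a, projSM_of_mem ha]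
  have hVeq : V =ᶠ[𝓝 x] fun z => Pr z a := by
    filter_upwards [χ.eventuallyEq_one] with z hz
    show χ z • Pr z a = Pr z a
    rw [hz]; exact one_smul _ _
  have hfd : fderiv ℝ V x = fderiv ℝ (fun z => Pr z a) x := hVeq.fderiv_eq
  have happ : HasFDerivAt (fun z => Pr z a) ((Pr x).comp 0 + (fderiv ℝ Pr x).flip a) x :=
    (hPrx.differentiableAt (by simp)).hasFDerivAt.clm_apply (hasFDerivAt_const a x)
  have hfd2 : fderiv ℝ (fun z => Pr z a) x = (Pr x).comp 0 + (fderiv ℝ Pr x).flip a :=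
    happ.fderiv
  have hkey : ∀ d : Euc n, fderiv ℝ V x d = (fderiv ℝ Pr x d) a := by
    intro d
    rw [hfd, hfd2]
    simp [ContinuousLinearMap.flip_apply]
  have := hA x hx a a ha ha V hVd htang hVx
  rw [this, hkey a]

lemma csf_uniqueDiff {Tm : ℝ≥0∞} {t₀ : ℝ} (ht : t₀ ∈ csfDomain Tm) :
    UniqueDiffWithinAt ℝ (csfDomain Tm) t₀ := by
  obtain ⟨δ, hδ, hsub⟩ : ∃ δ > 0, Ico t₀ (t₀ + δ) ⊆ csfDomain Tm := by
    by_cases hTm : Tm = ⊤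
    · refine ⟨1, one_pos, fun s hs => ⟨le_trans ht.1 hs.1, ?_⟩⟩
      rw [hTm]; exact ENNReal.ofReal_lt_top
    · have hlt : t₀ < Tm.toReal := (ENNReal.ofReal_lt_iff_lt_toReal ht.1 hTm).1 ht.2
      refine ⟨Tm.toReal - t₀, by linarith, fun s hs => ⟨le_trans ht.1 hs.1, ?_⟩⟩
      have : s < Tm.toReal := by have := hs.2; linarith
      exact (ENNReal.ofReal_lt_iff_lt_toReal (le_trans ht.1 hs.1) hTm).2 this
  exact (uniqueDiffOn_Ico t₀ (t₀ + δ) t₀ ⟨le_refl _, by linarith⟩).mono hsub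

end ChordAux

set_option maxHeartbeats 1000000 in
/-- **Evolution of `‖η^T‖²`.** Under the chord shortening flow,
`(1/2) d/dt ‖η^T‖² = -(ℓ/2)‖Δ^{1/2}η^T‖² + (1/ℓ)‖η^T‖⁴
  - ⟨A(η^T(p),η^T(p)), η(p)⟩ - ⟨A(η^T(q),η^T(q)), η(q)⟩`,
where `‖Δ^{1/2}η^T‖² = 2|η^T(p) - η^T(q)|²/ℓ²`. -/
theorem chord_statement_6 (n k : ℕ) (S : Set (Euc n)) (T : Euc n → Submodule ℝ (Euc n))
    (hsub : IsSubmanifold n k S T) (hcpt : IsCompact S)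
    (Tm : ℝ≥0∞) (p q : ℝ → Euc n) (hflow : IsCSFOn S T (csfDomain Tm) p q)
    (A : Euc n → Euc n → Euc n → Euc n)
    (hA : ∀ x ∈ S, ∀ u v : Euc n, u ∈ T x → v ∈ T x →
      ∀ V : Euc n → Euc n, DifferentiableAt ℝ V x → (∀ y ∈ S, V y ∈ T y) → V x = v →
        A x u v = fderiv ℝ V x u - projSM (T x) (fderiv ℝ V x u)) :
    ∀ t ∈ csfDomain Tm,
      HasDerivWithinAt (fun s => ‖conormalT T (p s) (q s)‖ ^ 2 + ‖conormalT T (q s) (p s)‖ ^ 2)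
        (2 * (-(‖p t - q t‖ / 2) *
              (2 * ‖conormalT T (p t) (q t) - conormalT T (q t) (p t)‖ ^ 2 / ‖p t - q t‖ ^ 2)
            + ‖p t - q t‖⁻¹ *
              (‖conormalT T (p t) (q t)‖ ^ 2 + ‖conormalT T (q t) (p t)‖ ^ 2) ^ 2
            - ⟪A (p t) (conormalT T (p t) (q t)) (conormalT T (p t) (q t)),
                ‖p t - q t‖⁻¹ • (p t - q t)⟫
            - ⟪A (q t) (conormalT T (q t) (p t)) (conormalT T (q t) (p t)),
                ‖q t - p t‖⁻¹ • (q t - p t)⟫))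
        (csfDomain Tm) t := by
  intro t ht
  obtain ⟨hpS, hqS, hne, hp', hq'⟩ := hflow t ht
  obtain ⟨ε₁, hε₁, P₁, hP₁x, hP₁⟩ := exists_smooth_proj hsub hpS
  obtain ⟨ε₂, hε₂, P₂, hP₂x, hP₂⟩ := exists_smooth_proj hsub hqS
  set dom' : Set ℝ := csfDomain Tm ∩ (p ⁻¹' ball (p t) ε₁ ∩ q ⁻¹' ball (q t) ε₂) with hdom'
  have hsubdom : dom' ⊆ csfDomain Tm := inter_subset_left
  have hdom'mem : dom' ∈ 𝓝[csfDomain Tm] t :=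
    inter_mem self_mem_nhdsWithin (inter_mem
      (hp'.continuousWithinAt (ball_mem_nhds (p t) hε₁))
      (hq'.continuousWithinAt (ball_mem_nhds (q t) hε₂)))
  have ht' : t ∈ dom' := ⟨ht, mem_ball_self hε₁, mem_ball_self hε₂⟩
  have hud : UniqueDiffWithinAt ℝ dom' t :=
    (csf_uniqueDiff ht).mono_nhds (nhdsWithin_le_iff.2 hdom'mem)
  have hp : HasDerivWithinAt p (-(conormalT T (p t) (q t))) dom' t := hp'.mono hsubdom
  have hq : HasDerivWithinAt q (-(conormalT T (q t) (p t))) dom' t := hq'.mono hsubdom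
  have hP₁proj : ∀ s ∈ dom', ∀ w, P₁ (p s) w = projSM (T (p s)) w := fun s hs w =>
    hP₁ (p s) ⟨(hflow s (hsubdom hs)).1, hs.2.1⟩ w
  have hP₂proj : ∀ s ∈ dom', ∀ w, P₂ (q s) w = projSM (T (q s)) w := fun s hs w =>
    hP₂ (q s) ⟨(hflow s (hsubdom hs)).2.1, hs.2.2⟩ w
  have hℓ : ‖p t - q t‖ ≠ 0 := norm_ne_zero_iff.2 (sub_ne_zero.2 hne)
  have hℓqp : ‖q t - p t‖ = ‖p t - q t‖ := norm_sub_rev _ _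
  have hu := unitvec_deriv hp hq hne
  have hv := unitvec_deriv hq hp hne.symm
  have hM₁ : HasDerivWithinAt (fun s => P₁ (p s))
      ((fderiv ℝ P₁ (p t)) (-(conormalT T (p t) (q t)))) dom' t :=
    ((hP₁x.differentiableAt (by simp)).hasFDerivAt).comp_hasDerivWithinAt t hp
  have hM₂ : HasDerivWithinAt (fun s => P₂ (q s))
      ((fderiv ℝ P₂ (q t)) (-(conormalT T (q t) (p t)))) dom' t :=
    ((hP₂x.differentiableAt (by simp)).hasFDerivAt).comp_hasDerivWithinAt t hq
  set L₁ := (fderiv ℝ P₁ (p t)) (-(conormalT T (p t) (q t))) with hL₁_def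
  set L₂ := (fderiv ℝ P₂ (q t)) (-(conormalT T (q t) (p t))) with hL₂_def
  set du := ‖p t - q t‖⁻¹ • (-(conormalT T (p t) (q t)) - -(conormalT T (q t) (p t))) +
      (-(‖p t - q t‖⁻¹ * ⟪p t - q t, -(conormalT T (p t) (q t)) - -(conormalT T (q t) (p t))⟫) /
        ‖p t - q t‖ ^ 2) • (p t - q t) with hdu_def
  set dv := ‖q t - p t‖⁻¹ • (-(conormalT T (q t) (p t)) - -(conormalT T (p t) (q t))) +
      (-(‖q t - p t‖⁻¹ * ⟪q t - p t, -(conormalT T (q t) (p t)) - -(conormalT T (p t) (q t))⟫) /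
        ‖q t - p t‖ ^ 2) • (q t - p t) with hdv_def
  have hX₁ := hM₁.clm_apply hu
  have hX₂ := hM₂.clm_apply hv
  have hsq₁ : (fun s : ℝ => ⟪P₁ (p s) (‖p s - q s‖⁻¹ • (p s - q s)),
      P₁ (p s) (‖p s - q s‖⁻¹ • (p s - q s))⟫)
      = (fun s : ℝ => ‖P₁ (p s) (‖p s - q s‖⁻¹ • (p s - q s))‖ ^ 2) :=
    funext fun s => real_inner_self_eq_norm_sq _
  have hsq₂ : (fun s : ℝ => ⟪P₂ (q s) (‖q s - p s‖⁻¹ • (q s - p s)),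
      P₂ (q s) (‖q s - p s‖⁻¹ • (q s - p s))⟫)
      = (fun s : ℝ => ‖P₂ (q s) (‖q s - p s‖⁻¹ • (q s - p s))‖ ^ 2) :=
    funext fun s => real_inner_self_eq_norm_sq _
  have hN₁ := hX₁.inner ℝ hX₁
  have hN₂ := hX₂.inner ℝ hX₂
  rw [hsq₁] at hN₁
  rw [hsq₂] at hN₂
  have hg := hN₁.add hN₂
  obtain ⟨hsym₁, hQLQ₁⟩ := proj_deriv_identities hM₁ hud ht'
    (fun s hs w w' => by
      rw [hP₁proj s hs w, hP₁proj s hs w']; exact projSM_inner_left _ _ _)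
    (fun s hs w => by
      rw [hP₁proj s hs w, hP₁proj s hs (projSM (T (p s)) w)]
      exact projSM_of_mem (projSM_mem _ _))
  obtain ⟨hsym₂, hQLQ₂⟩ := proj_deriv_identities hM₂ hud ht'
    (fun s hs w w' => by
      rw [hP₂proj s hs w, hP₂proj s hs w']; exact projSM_inner_left _ _ _)
    (fun s hs w => by
      rw [hP₂proj s hs w, hP₂proj s hs (projSM (T (q s)) w)]
      exact projSM_of_mem (projSM_mem _ _))
  have haK : conormalT T (p t) (q t) ∈ T (p t) := projSM_mem _ _
  have hbK : conormalT T (q t) (p t) ∈ T (q t) := projSM_mem _ _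
  have hAP := hA_value hA hpS hε₁ hP₁x hP₁ haK
  have hAQ := hA_value hA hqS hε₂ hP₂x hP₂ hbK
  -- basic pointwise identifications at time t
  have hXa : P₁ (p t) (‖p t - q t‖⁻¹ • (p t - q t)) = conormalT T (p t) (q t) :=
    hP₁proj t ht' _
  have hXb : P₂ (q t) (‖q t - p t‖⁻¹ • (q t - p t)) = conormalT T (q t) (p t) :=
    hP₂proj t ht' _
  have hproj_u : projSM (T (p t)) (‖p t - q t‖⁻¹ • (p t - q t)) = conormalT T (p t) (q t) := rfl
  have hproj_v : projSM (T (q t)) (‖q t - p t‖⁻¹ • (q t - p t)) = conormalT T (q t) (p t) := rfl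
  -- transfer the derivative to the chord function
  have horig : HasDerivWithinAt
      (fun s => ‖conormalT T (p s) (q s)‖ ^ 2 + ‖conormalT T (q s) (p s)‖ ^ 2)
      ((⟪P₁ (p t) (‖p t - q t‖⁻¹ • (p t - q t)),
          L₁ (‖p t - q t‖⁻¹ • (p t - q t)) + (P₁ (p t)) du⟫ +
        ⟪L₁ (‖p t - q t‖⁻¹ • (p t - q t)) + (P₁ (p t)) du,
          P₁ (p t) (‖p t - q t‖⁻¹ • (p t - q t))⟫) +
       (⟪P₂ (q t) (‖q t - p t‖⁻¹ • (q t - p t)),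
          L₂ (‖q t - p t‖⁻¹ • (q t - p t)) + (P₂ (q t)) dv⟫ +
        ⟪L₂ (‖q t - p t‖⁻¹ • (q t - p t)) + (P₂ (q t)) dv,
          P₂ (q t) (‖q t - p t‖⁻¹ • (q t - p t))⟫))
      dom' t := by
    refine hg.congr (fun s hs => ?_) ?_
    · show ‖conormalT T (p s) (q s)‖ ^ 2 + ‖conormalT T (q s) (p s)‖ ^ 2 = _
      rw [show conormalT T (p s) (q s) = P₁ (p s) (‖p s - q s‖⁻¹ • (p s - q s)) from
        (hP₁proj s hs _).symm,
        show conormalT T (q s) (p s) = P₂ (q s) (‖q s - p s‖⁻¹ • (q s - p s)) from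
        (hP₂proj s hs _).symm]
      rfl
    · show ‖conormalT T (p t) (q t)‖ ^ 2 + ‖conormalT T (q t) (p t)‖ ^ 2 = _
      rw [← hXa, ← hXb]
      rfl
  -- the inner product computations
  have hdouble : ∀ x y : Euc n, ⟪x, y⟫ + ⟪y, x⟫ = 2 * ⟪x, y⟫ := fun x y => by
    rw [real_inner_comm y x]; ring
  have hu0a : ⟪‖p t - q t‖⁻¹ • (p t - q t), conormalT T (p t) (q t)⟫
      = ‖conormalT T (p t) (q t)‖ ^ 2 := inner_projSM_self _ _
  have hv0b : ⟪‖q t - p t‖⁻¹ • (q t - p t), conormalT T (q t) (p t)⟫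
      = ‖conormalT T (q t) (p t)‖ ^ 2 := inner_projSM_self _ _
  have hv0u0 : ‖q t - p t‖⁻¹ • (q t - p t) = -(‖p t - q t‖⁻¹ • (p t - q t)) := by
    rw [hℓqp, ← smul_neg, neg_sub]
  have hu0b : ⟪‖p t - q t‖⁻¹ • (p t - q t), conormalT T (q t) (p t)⟫
      = -‖conormalT T (q t) (p t)‖ ^ 2 := by
    have h := hv0b
    rw [hv0u0, inner_neg_left] at h
    linarith
  have hv0a : ⟪‖q t - p t‖⁻¹ • (q t - p t), conormalT T (p t) (q t)⟫
      = -‖conormalT T (p t) (q t)‖ ^ 2 := by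
    rw [hv0u0, inner_neg_left, hu0a]
  have hpq : p t - q t = ‖p t - q t‖ • (‖p t - q t‖⁻¹ • (p t - q t)) := by
    rw [smul_smul, mul_inv_cancel₀ hℓ, one_smul]
  have hqp : q t - p t = ‖q t - p t‖ • (‖q t - p t‖⁻¹ • (q t - p t)) := by
    rw [smul_smul, hℓqp, mul_inv_cancel₀ hℓ, one_smul]
  -- the second fundamental form terms
  have hta : ⟪conormalT T (p t) (q t), L₁ (‖p t - q t‖⁻¹ • (p t - q t))⟫
      = -⟪A (p t) (conormalT T (p t) (q t)) (conormalT T (p t) (q t)),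
          ‖p t - q t‖⁻¹ • (p t - q t)⟫ := by
    have hQLQ' : projSM (T (p t)) (L₁ (conormalT T (p t) (q t))) = 0 := by
      have h := hQLQ₁ (‖p t - q t‖⁻¹ • (p t - q t))
      rw [hXa] at h
      rw [hP₁proj t ht' _] at h
      exact h
    have hLaa : ⟪L₁ (conormalT T (p t) (q t)), conormalT T (p t) (q t)⟫ = 0 := by
      have h' := projSM_inner_left (T (p t)) (L₁ (conormalT T (p t) (q t)))
        (‖p t - q t‖⁻¹ • (p t - q t))
      rw [hQLQ', inner_zero_left, hproj_u] at h'
      exact h'.symm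
    have hDa : (fderiv ℝ P₁ (p t)) (conormalT T (p t) (q t)) = -L₁ := by
      rw [hL₁_def, map_neg, neg_neg]
    rw [hAP, hDa, inner_sub_left, projSM_inner_left, hproj_u,
      ContinuousLinearMap.neg_apply, inner_neg_left, inner_neg_left, hLaa, ← hsym₁]
    ring
  have htb : ⟪conormalT T (q t) (p t), L₂ (‖q t - p t‖⁻¹ • (q t - p t))⟫
      = -⟪A (q t) (conormalT T (q t) (p t)) (conormalT T (q t) (p t)),
          ‖q t - p t‖⁻¹ • (q t - p t)⟫ := by
    have hQLQ' : projSM (T (q t)) (L₂ (conormalT T (q t) (p t))) = 0 := by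
      have h := hQLQ₂ (‖q t - p t‖⁻¹ • (q t - p t))
      rw [hXb] at h
      rw [hP₂proj t ht' _] at h
      exact h
    have hLbb : ⟪L₂ (conormalT T (q t) (p t)), conormalT T (q t) (p t)⟫ = 0 := by
      have h' := projSM_inner_left (T (q t)) (L₂ (conormalT T (q t) (p t)))
        (‖q t - p t‖⁻¹ • (q t - p t))
      rw [hQLQ', inner_zero_left, hproj_v] at h'
      exact h'.symm
    have hDb : (fderiv ℝ P₂ (q t)) (conormalT T (q t) (p t)) = -L₂ := by
      rw [hL₂_def, map_neg, neg_neg]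
    rw [hAQ, hDb, inner_sub_left, projSM_inner_left, hproj_v,
      ContinuousLinearMap.neg_apply, inner_neg_left, inner_neg_left, hLbb, ← hsym₂]
    ring
  -- the projected-velocity terms
  have hPa : ⟪conormalT T (p t) (q t), (P₁ (p t)) du⟫ = ⟪conormalT T (p t) (q t), du⟫ := by
    rw [hP₁proj t ht' du]; exact inner_projSM_of_mem haK du
  have hPb : ⟪conormalT T (q t) (p t), (P₂ (q t)) dv⟫ = ⟪conormalT T (q t) (p t), dv⟫ := by
    rw [hP₂proj t ht' dv]; exact inner_projSM_of_mem hbK dv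
  -- scalar expansion of ⟪a, du⟫ and ⟪b, dv⟫
  have hra : ⟪p t - q t, -(conormalT T (p t) (q t)) - -(conormalT T (q t) (p t))⟫
      = ‖p t - q t‖ * (-‖conormalT T (p t) (q t)‖ ^ 2 - ‖conormalT T (q t) (p t)‖ ^ 2) := by
    have h2 := real_inner_smul_left (p t - q t)
      (-(conormalT T (p t) (q t)) - -(conormalT T (q t) (p t))) (‖p t - q t‖⁻¹)
    have h3 : ⟪‖p t - q t‖⁻¹ • (p t - q t),
        -(conormalT T (p t) (q t)) - -(conormalT T (q t) (p t))⟫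
        = -‖conormalT T (p t) (q t)‖ ^ 2 - ‖conormalT T (q t) (p t)‖ ^ 2 := by
      rw [inner_sub_right, inner_neg_right, inner_neg_right, hu0a, hu0b]; ring
    rw [h2] at h3
    have h5 : ‖p t - q t‖ * (‖p t - q t‖⁻¹ *
        ⟪p t - q t, -(conormalT T (p t) (q t)) - -(conormalT T (q t) (p t))⟫)
        = ‖p t - q t‖ * (-‖conormalT T (p t) (q t)‖ ^ 2 - ‖conormalT T (q t) (p t)‖ ^ 2) := by
      rw [h3]
    rwa [← mul_assoc, mul_inv_cancel₀ hℓ, one_mul] at h5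
  have hrb : ⟪q t - p t, -(conormalT T (q t) (p t)) - -(conormalT T (p t) (q t))⟫
      = ‖q t - p t‖ * (-‖conormalT T (q t) (p t)‖ ^ 2 - ‖conormalT T (p t) (q t)‖ ^ 2) := by
    have h2 := real_inner_smul_left (q t - p t)
      (-(conormalT T (q t) (p t)) - -(conormalT T (p t) (q t))) (‖q t - p t‖⁻¹)
    have h3 : ⟪‖q t - p t‖⁻¹ • (q t - p t),
        -(conormalT T (q t) (p t)) - -(conormalT T (p t) (q t))⟫
        = -‖conormalT T (q t) (p t)‖ ^ 2 - ‖conormalT T (p t) (q t)‖ ^ 2 := by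
      rw [inner_sub_right, inner_neg_right, inner_neg_right, hv0b, hv0a]; ring
    rw [h2, hℓqp] at h3
    rw [hℓqp]
    have h5 : ‖p t - q t‖ * (‖p t - q t‖⁻¹ *
        ⟪q t - p t, -(conormalT T (q t) (p t)) - -(conormalT T (p t) (q t))⟫)
        = ‖p t - q t‖ * (-‖conormalT T (q t) (p t)‖ ^ 2 - ‖conormalT T (p t) (q t)‖ ^ 2) := by
      rw [h3]
    rwa [← mul_assoc, mul_inv_cancel₀ hℓ, one_mul] at h5
  have hadu : ⟪conormalT T (p t) (q t), du⟫ =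
      ‖p t - q t‖⁻¹ * ((-‖conormalT T (p t) (q t)‖ ^ 2 +
        ⟪conormalT T (p t) (q t), conormalT T (q t) (p t)⟫) +
        (‖conormalT T (p t) (q t)‖ ^ 2 + ‖conormalT T (q t) (p t)‖ ^ 2) *
          ‖conormalT T (p t) (q t)‖ ^ 2) := by
    rw [hdu_def, inner_add_right, real_inner_smul_right, real_inner_smul_right,
      inner_sub_right, inner_neg_right, inner_neg_right, hra,
      real_inner_self_eq_norm_sq,
      show ⟪conormalT T (p t) (q t), p t - q t⟫
        = ‖p t - q t‖ * ‖conormalT T (p t) (q t)‖ ^ 2 from by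
          have h2 := real_inner_smul_left (p t - q t)
            (conormalT T (p t) (q t)) (‖p t - q t‖⁻¹)
          have h3 := hu0a
          rw [h2] at h3
          rw [real_inner_comm]
          have h5 : ‖p t - q t‖ * (‖p t - q t‖⁻¹ * ⟪p t - q t, conormalT T (p t) (q t)⟫)
              = ‖p t - q t‖ * ‖conormalT T (p t) (q t)‖ ^ 2 := by rw [h3]
          rwa [← mul_assoc, mul_inv_cancel₀ hℓ, one_mul] at h5]
    field_simp
    ring
  have hbdv : ⟪conormalT T (q t) (p t), dv⟫ =
      ‖p t - q t‖⁻¹ * ((-‖conormalT T (q t) (p t)‖ ^ 2 +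
        ⟪conormalT T (p t) (q t), conormalT T (q t) (p t)⟫) +
        (‖conormalT T (p t) (q t)‖ ^ 2 + ‖conormalT T (q t) (p t)‖ ^ 2) *
          ‖conormalT T (q t) (p t)‖ ^ 2) := by
    rw [hdv_def, inner_add_right, real_inner_smul_right, real_inner_smul_right,
      inner_sub_right, inner_neg_right, inner_neg_right, hrb,
      real_inner_self_eq_norm_sq,
      show ⟪conormalT T (q t) (p t), q t - p t⟫
        = ‖q t - p t‖ * ‖conormalT T (q t) (p t)‖ ^ 2 from by
          have h2 := real_inner_smul_left (q t - p t)
            (conormalT T (q t) (p t)) (‖q t - p t‖⁻¹)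
          have h3 := hv0b
          rw [h2, hℓqp] at h3
          rw [real_inner_comm, hℓqp]
          have h5 : ‖p t - q t‖ * (‖p t - q t‖⁻¹ * ⟪q t - p t, conormalT T (q t) (p t)⟫)
              = ‖p t - q t‖ * ‖conormalT T (q t) (p t)‖ ^ 2 := by rw [h3]
          rwa [← mul_assoc, mul_inv_cancel₀ hℓ, one_mul] at h5,
      real_inner_comm (conormalT T (q t) (p t)), hℓqp]
    field_simp
    ring
  -- final value identification
  have hval : 2 * (-(‖p t - q t‖ / 2) *
        (2 * ‖conormalT T (p t) (q t) - conormalT T (q t) (p t)‖ ^ 2 / ‖p t - q t‖ ^ 2)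
      + ‖p t - q t‖⁻¹ *
        (‖conormalT T (p t) (q t)‖ ^ 2 + ‖conormalT T (q t) (p t)‖ ^ 2) ^ 2
      - ⟪A (p t) (conormalT T (p t) (q t)) (conormalT T (p t) (q t)),
          ‖p t - q t‖⁻¹ • (p t - q t)⟫
      - ⟪A (q t) (conormalT T (q t) (p t)) (conormalT T (q t) (p t)),
          ‖q t - p t‖⁻¹ • (q t - p t)⟫) =
      ((⟪P₁ (p t) (‖p t - q t‖⁻¹ • (p t - q t)),
          L₁ (‖p t - q t‖⁻¹ • (p t - q t)) + (P₁ (p t)) du⟫ +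
        ⟪L₁ (‖p t - q t‖⁻¹ • (p t - q t)) + (P₁ (p t)) du,
          P₁ (p t) (‖p t - q t‖⁻¹ • (p t - q t))⟫) +
       (⟪P₂ (q t) (‖q t - p t‖⁻¹ • (q t - p t)),
          L₂ (‖q t - p t‖⁻¹ • (q t - p t)) + (P₂ (q t)) dv⟫ +
        ⟪L₂ (‖q t - p t‖⁻¹ • (q t - p t)) + (P₂ (q t)) dv,
          P₂ (q t) (‖q t - p t‖⁻¹ • (q t - p t))⟫)) := by
    rw [hXa, hXb, hdouble, hdouble, inner_add_right, inner_add_right,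
      hta, htb, hPa, hPb, hadu, hbdv, norm_sub_sq_real]
    field_simp
    ring
  rw [hval]
  exact horig.mono_of_mem_nhdsWithin hdom'mem


end
end

section
/- Let Ω ⊂ ℝ² be a compact connected region with smooth boundary ∂Ω, and let (p,q) : [0,T) → ∂Ω × ∂Ω be a chord shortening flow relative to ∂Ω. Then the boundary angle evolves by d/dt Θ(p) = −(Θ(p) − Θ(q))/ℓ + (1/ℓ)(‖Θ‖² + ℓ·k(p)·⟨−η(p), ν(p)⟩)·Θ(p) + (1/ℓ)(1 + ⟨ξ(p), ξ(q)⟩)(Θ(p) − Θ̄), where ℓ = ℓ(t) = |p(t) − q(t)|, and the symmetric equation (with p and q interchanged) holds for d/dt Θ(q). -/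
open scoped RealInnerProductSpace ENNReal
open Set Filter

noncomputable section

/-- Counterclockwise rotation by `π/2` in the plane. -/
def Jrot (v : Euc 2) : Euc 2 := !₂[-(v 1), v 0]

/-- The boundary angle `Θ(p) = ⟨η(p), ξ(p)⟩` at the first endpoint of the oriented chord
from `p` to `q`, where `η(p) = (p-q)/|p-q|` and `ξ` is the orientation field. -/
def thetaP (ξ : Euc 2 → Euc 2) (p q : Euc 2) : ℝ := ⟪‖p - q‖⁻¹ • (p - q), ξ p⟫

/-- The boundary angle `Θ(q) = -⟨η(q), ξ(q)⟩` at the second endpoint of the oriented chord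
from `p` to `q`, where `η(q) = (q-p)/|q-p|` and `ξ` is the orientation field. -/
def thetaQ (ξ : Euc 2 → Euc 2) (p q : Euc 2) : ℝ := -⟪‖q - p‖⁻¹ • (q - p), ξ q⟫

set_option maxHeartbeats 1000000

/-! ### Auxiliary lemmas -/

lemma euc2_inner' (x y : Euc 2) : ⟪x, y⟫ = x 0 * y 0 + x 1 * y 1 := by
  simp [PiLp.inner_apply, Fin.sum_univ_two, RCLike.inner_apply]
  ring

lemma jrot_decomp' (w v : Euc 2) (hw : ‖w‖ = 1) :
    v = ⟪v, w⟫ • w + ⟪v, Jrot w⟫ • Jrot w := by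
  have h1 : w 0 * w 0 + w 1 * w 1 = 1 := by
    have := real_inner_self_eq_norm_sq w
    rw [hw, euc2_inner'] at this
    linarith [this]
  ext i
  fin_cases i <;>
    simp [Jrot, euc2_inner', PiLp.add_apply, PiLp.smul_apply, smul_eq_mul]
  · linear_combination (-(v 0)) * h1
  · linear_combination (-(v 1)) * h1

lemma mem_tangentCone_of_submanifold' {n k : ℕ} {S : Set (Euc n)}
    {T : Euc n → Submodule ℝ (Euc n)}
    (hsub : IsSubmanifold n k S T) {x : Euc n} (hx : x ∈ S) {w : Euc n} (hw : w ∈ T x) :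
    w ∈ tangentConeAt ℝ S x := by
  obtain ⟨f, u, v, hu, hv, hxv, hcd, hinj, himg, -, hdf⟩ := hsub x hx
  have hxmem : x ∈ f '' u := by rw [himg]; exact ⟨hx, hxv⟩
  obtain ⟨y, hy, rfl⟩ := hxmem
  obtain ⟨e, he⟩ : ∃ e, fderiv ℝ f y e = w := by
    have := (hdf y hy).2
    rw [← this] at hw
    exact hw
  have hdiff : HasFDerivAt f (fderiv ℝ f y) y :=
    (((hcd y hy).contDiffAt (hu.mem_nhds hy)).differentiableAt
      (by simp)).hasFDerivAt
  have hline : HasDerivAt (fun s : ℝ => f (y + s • e)) (fderiv ℝ f y e) 0 := by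
    have h1 : HasDerivAt (fun s : ℝ => y + s • e) e 0 := by
      simpa using ((hasDerivAt_id (0:ℝ)).smul_const e).const_add y
    have h0 : HasFDerivAt f (fderiv ℝ f y) (y + (0:ℝ) • e) := by simpa using hdiff
    exact h0.comp_hasDerivAt (0:ℝ) h1
  have hslope := hasDerivAt_iff_tendsto_slope.1 hline
  set g : ℝ → Euc n := fun s => f (y + s • e) with hg
  refine mem_tangentConeAt_of_seq atTop (fun m : ℕ => (m : ℝ) + 1)
    (fun m => g (((m:ℝ)+1)⁻¹) - g 0) (by
      have h0 : Tendsto (fun m : ℕ => ((m:ℝ)+1)⁻¹) atTop (nhds 0) := by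
        simpa only [one_div] using tendsto_one_div_add_atTop_nhds_zero_nat (𝕜 := ℝ)
      have := (hline.continuousAt.tendsto.comp h0).sub_const (g 0)
      rw [sub_self] at this
      exact this) ?_ ?_
  · have htend : Tendsto (fun m : ℕ => y + ((m:ℝ)+1)⁻¹ • e) atTop (nhds y) := by
      have : Tendsto (fun m : ℕ => ((m:ℝ)+1)⁻¹) atTop (nhds 0) := by
        simpa only [one_div] using tendsto_one_div_add_atTop_nhds_zero_nat (𝕜 := ℝ)
      simpa using (this.smul_const e).const_add y
    filter_upwards [htend.eventually (hu.mem_nhds hy)] with m hm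
    have : g (((m:ℝ)+1)⁻¹) ∈ S := by
      have : g (((m:ℝ)+1)⁻¹) ∈ f '' u := ⟨_, hm, rfl⟩
      rw [himg] at this; exact this.1
    simpa [hg] using this
  · have htinv : Tendsto (fun m : ℕ => ((m:ℝ)+1)⁻¹) atTop (nhdsWithin 0 {(0:ℝ)}ᶜ) := by
      refine tendsto_nhdsWithin_of_tendsto_nhds_of_eventually_within _
        (by simpa only [one_div] using tendsto_one_div_add_atTop_nhds_zero_nat (𝕜 := ℝ)) ?_
      filter_upwards with m
      have : ((m:ℝ)+1)⁻¹ ≠ 0 := by positivity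
      simpa [Set.mem_compl_iff] using this
    have := hslope.comp htinv
    rw [he] at this
    refine this.congr fun m => ?_
    simp only [Function.comp, slope_def_module, sub_zero, inv_inv]

lemma tangent_span' {S : Set (Euc 2)} {T : Euc 2 → Submodule ℝ (Euc 2)}
    (hsub : IsSubmanifold 2 1 S T) {x : Euc 2} (hx : x ∈ S) {w : Euc 2}
    (hw : w ∈ T x) (hwn : w ≠ 0) : T x = (ℝ ∙ w) := by
  obtain ⟨f, u, v, hu, hv, hxv, hcd, hinj, himg, -, hdf⟩ := hsub x hx
  have hxmem : x ∈ f '' u := by rw [himg]; exact ⟨hx, hxv⟩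
  obtain ⟨y, hy, rfl⟩ := hxmem
  have hrange := (hdf y hy).2
  have h1 : Module.finrank ℝ (T (f y)) ≤ 1 := by
    rw [← hrange]
    calc Module.finrank ℝ (LinearMap.range ((fderiv ℝ f y) : Euc 1 →ₗ[ℝ] Euc 2))
        ≤ Module.finrank ℝ (Euc 1) := LinearMap.finrank_range_le _
      _ = 1 := finrank_euclideanSpace_fin
  have hle : (ℝ ∙ w) ≤ T (f y) := by
    rw [Submodule.span_singleton_le_iff_mem]; exact hw
  have h2 : Module.finrank ℝ (ℝ ∙ w) = 1 := finrank_span_singleton hwn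
  exact (Submodule.eq_of_le_of_finrank_le hle (by omega)).symm

lemma proj_formula' {S : Set (Euc 2)} {T : Euc 2 → Submodule ℝ (Euc 2)}
    (hsub : IsSubmanifold 2 1 S T) {x : Euc 2} (hx : x ∈ S) {w : Euc 2}
    (hw : w ∈ T x) (hwn : ‖w‖ = 1) (v : Euc 2) :
    projSM (T x) v = ⟪v, w⟫ • w := by
  have h0 : w ≠ 0 := by intro h; rw [h] at hwn; simp at hwn
  rw [projSM, tangent_span' hsub hx hw h0]
  change (ℝ ∙ w).starProjection v = _
  rw [Submodule.starProjection_singleton, hwn,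
    real_inner_comm]
  simp

lemma dxi_eq' {S : Set (Euc 2)} {T : Euc 2 → Submodule ℝ (Euc 2)}
    (hsub : IsSubmanifold 2 1 S T) {ξ : Euc 2 → Euc 2}
    (hmem : ∀ x ∈ S, ξ x ∈ T x) (hnorm : ∀ x ∈ S, ‖ξ x‖ = 1)
    {x : Euc 2} (hx : x ∈ S) {dξ : Euc 2 →L[ℝ] Euc 2}
    (hd : HasFDerivWithinAt ξ dξ S x) :
    dξ (ξ x) = ⟪dξ (ξ x), Jrot (ξ x)⟫ • Jrot (ξ x) := by
  have hn1 : ‖ξ x‖ = 1 := hnorm x hx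
  have horth : ⟪dξ (ξ x), ξ x⟫ = 0 := by
    have hsq : HasFDerivWithinAt (fun y => ⟪ξ y, ξ y⟫)
        ((fderivInnerCLM ℝ (ξ x, ξ x)).comp (dξ.prod dξ)) S x := hd.inner ℝ hd
    have hconst : HasFDerivWithinAt (fun _ : Euc 2 => (1:ℝ))
        ((fderivInnerCLM ℝ (ξ x, ξ x)).comp (dξ.prod dξ)) S x := by
      refine hsq.congr (fun y hy => ?_) ?_
      · beta_reduce; rw [real_inner_self_eq_norm_sq, hnorm y hy]; norm_num
      · rw [real_inner_self_eq_norm_sq, hn1]; norm_num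
    have hzero : HasFDerivWithinAt (fun _ : Euc 2 => (1:ℝ)) (0 : Euc 2 →L[ℝ] ℝ) S x :=
      hasFDerivWithinAt_const 1 x S
    have huniq := hconst.unique_on hzero (mem_tangentCone_of_submanifold' hsub hx (hmem x hx))
    have : ⟪ξ x, dξ (ξ x)⟫ + ⟪dξ (ξ x), ξ x⟫ = 0 := by
      have h := huniq
      simp only [ContinuousLinearMap.comp_apply, ContinuousLinearMap.prod_apply,
        fderivInnerCLM_apply, ContinuousLinearMap.zero_apply] at h
      exact h
    have h2 : ⟪dξ (ξ x), ξ x⟫ = ⟪ξ x, dξ (ξ x)⟫ := real_inner_comm _ _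
    linarith
  conv_lhs => rw [jrot_decomp' (ξ x) (dξ (ξ x)) hn1]
  rw [horth]
  simp

/-- **Evolution of the boundary angle** under the chord shortening flow relative to the smooth
boundary of a compact connected planar region:
`dΘ(p)/dt = -(Θ(p)-Θ(q))/ℓ + (1/ℓ)(‖Θ‖² + ℓ·k(p)·⟨-η(p),ν(p)⟩)Θ(p)
 + (1/ℓ)(1+⟨ξ(p),ξ(q)⟩)(Θ(p)-Θ̄)`, and symmetrically at `q`. -/
theorem chord_statement_12
    (Ω : Set (Euc 2)) (hcpt : IsCompact Ω) (hconn : IsConnected Ω)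
    (hreg : Ω = closure (interior Ω))
    (T : Euc 2 → Submodule ℝ (Euc 2)) (hsub : IsSubmanifold 2 1 (frontier Ω) T)
    (ξ : Euc 2 → Euc 2)
    (hξ : ∀ x ∈ frontier Ω, ξ x ∈ T x ∧ ‖ξ x‖ = 1 ∧
      ∃ ε : ℝ, 0 < ε ∧ ∀ s : ℝ, 0 < s → s < ε → x + s • Jrot (ξ x) ∈ interior Ω)
    (κ : Euc 2 → ℝ)
    (hκ : ∀ x ∈ frontier Ω, ∃ dξ : Euc 2 →L[ℝ] Euc 2,
      HasFDerivWithinAt ξ dξ (frontier Ω) x ∧ κ x = ⟪dξ (ξ x), Jrot (ξ x)⟫)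
    (Tm : ℝ≥0∞) (p q : ℝ → Euc 2)
    (hflow : IsCSFOn (frontier Ω) T (csfDomain Tm) p q) :
    ∀ t ∈ csfDomain Tm,
      HasDerivWithinAt (fun s => thetaP ξ (p s) (q s))
        (-(thetaP ξ (p t) (q t) - thetaQ ξ (p t) (q t)) / ‖p t - q t‖
          + ‖p t - q t‖⁻¹ *
              ((thetaP ξ (p t) (q t) ^ 2 + thetaQ ξ (p t) (q t) ^ 2)
                + ‖p t - q t‖ * κ (p t) *
                  ⟪-(‖p t - q t‖⁻¹ • (p t - q t)), Jrot (ξ (p t))⟫) *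
              thetaP ξ (p t) (q t)
          + ‖p t - q t‖⁻¹ * (1 + ⟪ξ (p t), ξ (q t)⟫) *
              (thetaP ξ (p t) (q t) - (thetaP ξ (p t) (q t) + thetaQ ξ (p t) (q t))))
        (csfDomain Tm) t ∧
      HasDerivWithinAt (fun s => thetaQ ξ (p s) (q s))
        (-(thetaQ ξ (p t) (q t) - thetaP ξ (p t) (q t)) / ‖p t - q t‖
          + ‖p t - q t‖⁻¹ *
              ((thetaP ξ (p t) (q t) ^ 2 + thetaQ ξ (p t) (q t) ^ 2)
                + ‖p t - q t‖ * κ (q t) *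
                  ⟪-(‖q t - p t‖⁻¹ • (q t - p t)), Jrot (ξ (q t))⟫) *
              thetaQ ξ (p t) (q t)
          + ‖p t - q t‖⁻¹ * (1 + ⟪ξ (q t), ξ (p t)⟫) *
              (thetaQ ξ (p t) (q t) - (thetaP ξ (p t) (q t) + thetaQ ξ (p t) (q t))))
        (csfDomain Tm) t := by
  intro t ht
  obtain ⟨hpS, hqS, hpq, hp', hq'⟩ := hflow t ht
  set S := frontier Ω with hS
  set D := csfDomain Tm with hD
  have hmapP : MapsTo p D S := fun s hs => (hflow s hs).1
  have hmapQ : MapsTo q D S := fun s hs => (hflow s hs).2.1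
  have hξmem : ∀ x ∈ S, ξ x ∈ T x := fun x hx => (hξ x hx).1
  have hξnorm : ∀ x ∈ S, ‖ξ x‖ = 1 := fun x hx => (hξ x hx).2.1
  obtain ⟨dξp, hdP, hκP⟩ := hκ (p t) hpS
  obtain ⟨dξq, hdQ, hκQ⟩ := hκ (q t) hqS
  have hℓpos : (0:ℝ) < ‖p t - q t‖ := by
    rw [norm_pos_iff]; exact sub_ne_zero.2 hpq
  have hℓ : ‖p t - q t‖ ≠ 0 := ne_of_gt hℓpos
  set ℓ := ‖p t - q t‖ with hℓdef
  set Θp := thetaP ξ (p t) (q t) with hΘp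
  set Θq := thetaQ ξ (p t) (q t) with hΘq
  -- the flow velocities
  have hconP : conormalT T (p t) (q t) = Θp • ξ (p t) := by
    rw [conormalT, proj_formula' hsub hpS (hξmem _ hpS) (hξnorm _ hpS)]
    rfl
  have hconQ : conormalT T (q t) (p t) = (-Θq) • ξ (q t) := by
    rw [conormalT, proj_formula' hsub hqS (hξmem _ hqS) (hξnorm _ hqS)]
    congr 1
    rw [hΘq, thetaQ]
    ring
  have hp2 : HasDerivWithinAt p (-(Θp • ξ (p t))) D t := by
    rw [← hconP]; exact hp'
  have hq2 : HasDerivWithinAt q (Θq • ξ (q t)) D t := by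
    have := hq'
    rw [hconQ] at this
    simpa using this
  -- derivative of ξ along curves
  have hdxiP : dξp (ξ (p t)) = κ (p t) • Jrot (ξ (p t)) := by
    rw [dxi_eq' hsub hξmem hξnorm hpS hdP, ← hκP]
  have hdxiQ : dξq (ξ (q t)) = κ (q t) • Jrot (ξ (q t)) := by
    rw [dxi_eq' hsub hξmem hξnorm hqS hdQ, ← hκQ]
  have hξp : HasDerivWithinAt (fun s => ξ (p s)) ((-Θp * κ (p t)) • Jrot (ξ (p t))) D t := by
    have h := hdP.comp_hasDerivWithinAt t hp2 hmapP
    have he : dξp (-(Θp • ξ (p t))) = (-Θp * κ (p t)) • Jrot (ξ (p t)) := by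
      rw [map_neg, map_smul, hdxiP, smul_smul, neg_mul, neg_smul]
    rw [he] at h
    exact h
  have hξq : HasDerivWithinAt (fun s => ξ (q s)) ((Θq * κ (q t)) • Jrot (ξ (q t))) D t := by
    have h := hdQ.comp_hasDerivWithinAt t hq2 hmapQ
    have he : dξq (Θq • ξ (q t)) = (Θq * κ (q t)) • Jrot (ξ (q t)) := by
      rw [map_smul, hdxiQ, smul_smul]
    rw [he] at h
    exact h
  -- the chord vector
  set r' : Euc 2 := -(Θp • ξ (p t)) - Θq • ξ (q t) with hr'def
  have hr : HasDerivWithinAt (fun s => p s - q s) r' D t := hp2.sub hq2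
  -- norm derivative
  have hrr : HasDerivWithinAt (fun s => ⟪p s - q s, p s - q s⟫)
      (⟪p t - q t, r'⟫ + ⟪r', p t - q t⟫) D t := hr.inner ℝ hr
  have hNorm : HasDerivWithinAt (fun s => ‖p s - q s‖)
      ((⟪p t - q t, r'⟫ + ⟪r', p t - q t⟫) / (2 * ℓ)) D t := by
    have hne : ⟪p t - q t, p t - q t⟫ ≠ 0 := by
      rw [real_inner_self_eq_norm_sq]
      positivity
    have hsq := hrr.sqrt hne
    have hval : Real.sqrt ⟪p t - q t, p t - q t⟫ = ℓ := by
      rw [real_inner_self_eq_norm_sq, Real.sqrt_sq (norm_nonneg _)]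
    rw [hval] at hsq
    refine hsq.congr (fun y _ => ?_) ?_
    · rw [real_inner_self_eq_norm_sq, Real.sqrt_sq (norm_nonneg _)]
    · rw [real_inner_self_eq_norm_sq, Real.sqrt_sq (norm_nonneg _)]
  have hInv : HasDerivWithinAt (fun s => ‖p s - q s‖⁻¹)
      (-((⟪p t - q t, r'⟫ + ⟪r', p t - q t⟫) / (2 * ℓ)) / ℓ ^ 2) D t :=
    hNorm.inv hℓ
  -- scalar inner-product identities
  have hrξP : ⟪p t - q t, ξ (p t)⟫ = ℓ * Θp := by
    rw [hΘp, thetaP, real_inner_smul_left]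
    field_simp
    exact (mul_div_cancel_right₀ _ hℓ).symm
  have hrξQ : ⟪p t - q t, ξ (q t)⟫ = ℓ * Θq := by
    rw [hΘq, thetaQ, real_inner_smul_left, norm_sub_rev]
    have : q t - p t = -(p t - q t) := by abel
    rw [this, inner_neg_left]
    field_simp
    exact (mul_div_cancel_right₀ _ hℓ).symm
  have hξPP : ⟪ξ (p t), ξ (p t)⟫ = 1 := by
    rw [real_inner_self_eq_norm_sq, hξnorm _ hpS]; norm_num
  have hξQQ : ⟪ξ (q t), ξ (q t)⟫ = 1 := by
    rw [real_inner_self_eq_norm_sq, hξnorm _ hqS]; norm_num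
  have hrr' : ⟪p t - q t, r'⟫ = -(ℓ * Θp * Θp) - ℓ * Θq * Θq := by
    rw [hr'def, inner_sub_right, inner_neg_right, real_inner_smul_right,
      real_inner_smul_right, hrξP, hrξQ]
    ring
  have hr'r : ⟪r', p t - q t⟫ = -(ℓ * Θp * Θp) - ℓ * Θq * Θq := by
    rw [real_inner_comm, hrr']
  -- the inner products with ξ for the two components
  have hr'ξP : ⟪r', ξ (p t)⟫ = -Θp - Θq * ⟪ξ (p t), ξ (q t)⟫ := by
    rw [hr'def, inner_sub_left, inner_neg_left, real_inner_smul_left,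
      real_inner_smul_left, hξPP, real_inner_comm (ξ (q t))]
    ring
  have hr'ξQ : ⟪r', ξ (q t)⟫ = -Θp * ⟪ξ (p t), ξ (q t)⟫ - Θq := by
    rw [hr'def, inner_sub_left, inner_neg_left, real_inner_smul_left,
      real_inner_smul_left, hξQQ]
    ring
  -- main derivatives of the two inner-product functions
  have hGp : HasDerivWithinAt (fun s => ⟪p s - q s, ξ (p s)⟫)
      (⟪p t - q t, (-Θp * κ (p t)) • Jrot (ξ (p t))⟫ + ⟪r', ξ (p t)⟫) D t :=
    hr.inner ℝ hξp
  have hGq : HasDerivWithinAt (fun s => ⟪p s - q s, ξ (q s)⟫)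
      (⟪p t - q t, (Θq * κ (q t)) • Jrot (ξ (q t))⟫ + ⟪r', ξ (q t)⟫) D t :=
    hr.inner ℝ hξq
  have hPmain := hInv.mul hGp
  have hQmain := hInv.mul hGq
  -- rewrite the theta functions as products
  have hfunP : (fun s => thetaP ξ (p s) (q s))
      = fun s => ‖p s - q s‖⁻¹ * ⟪p s - q s, ξ (p s)⟫ := by
    funext s
    rw [thetaP, real_inner_smul_left]
  have hfunQ : (fun s => thetaQ ξ (p s) (q s))
      = fun s => ‖p s - q s‖⁻¹ * ⟪p s - q s, ξ (q s)⟫ := by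
    funext s
    rw [thetaQ, real_inner_smul_left, norm_sub_rev]
    have : q s - p s = -(p s - q s) := by abel
    rw [this, inner_neg_left]
    ring
  -- values of the remaining inner products in the target
  have hAp : ⟪-(ℓ⁻¹ • (p t - q t)), Jrot (ξ (p t))⟫
      = -(ℓ⁻¹ * ⟪p t - q t, Jrot (ξ (p t))⟫) := by
    rw [inner_neg_left, real_inner_smul_left]
  have hAq : ⟪-(‖q t - p t‖⁻¹ • (q t - p t)), Jrot (ξ (q t))⟫
      = ℓ⁻¹ * ⟪p t - q t, Jrot (ξ (q t))⟫ := by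
    rw [norm_sub_rev]
    have : q t - p t = -(p t - q t) := by abel
    rw [this, smul_neg, neg_neg, real_inner_smul_left]
  have hsmulP : ⟪p t - q t, (-Θp * κ (p t)) • Jrot (ξ (p t))⟫
      = (-Θp * κ (p t)) * ⟪p t - q t, Jrot (ξ (p t))⟫ := real_inner_smul_right _ _ _
  have hsmulQ : ⟪p t - q t, (Θq * κ (q t)) • Jrot (ξ (q t))⟫
      = (Θq * κ (q t)) * ⟪p t - q t, Jrot (ξ (q t))⟫ := real_inner_smul_right _ _ _
  constructor
  · rw [hfunP]
    refine hPmain.congr_deriv ?_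
    rw [hsmulP, hr'ξP, hrr', hr'r, hrξP, hAp]
    rw [real_inner_comm (ξ (q t)) (ξ (p t))] -- just in case; may fail
    rw [← hℓdef]
    field_simp
    ring
  · rw [hfunQ]
    refine hQmain.congr_deriv ?_
    rw [hsmulQ, hr'ξQ, hrr', hr'r, hrξQ, hAq]
    rw [real_inner_comm (ξ (q t)) (ξ (p t))]
    rw [← hℓdef]
    field_simp
    ring

end
end
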